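/- arXiv:1507.01089 — 2 statements merged into one kernel-verified Lean document; each statement's English description precedes it below -/
import Mathlib

section
/- (Pairing of products, permanent formula) Let S_1,...,S_n be primitive series and P_1,...,P_n proper polynomials in K⟨Y⟩. Then ⟨P_1 ⧢_φ ⋯ ⧢_φ P_n, S_1 S_2 ⋯ S_n⟩ = Σ_{σ ∈ 𝔖_n} Π_{i=1}^n ⟨P_i, S_{σ(i)}⟩. -/
noncomputable section

open Finsupp

variable {K : Type*} [CommRing K] [Algebra ℚ K]
variable {Y : Type*} [DecidableEq Y]

/-- The word `w ∈ Y*` viewed as a basis element of `K⟨Y⟩`. -/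
def word (w : List Y) : List Y →₀ K := Finsupp.single w 1

/-- Left concatenation by a letter, as a linear endomorphism of `K⟨Y⟩`. -/
def consL (a : Y) : (List Y →₀ K) →ₗ[K] (List Y →₀ K) :=
  Finsupp.lmapDomain K K (List.cons a)

/-- `m` is the `φ`-deformed shuffle product: it satisfies the initialization
`1 ⧢ w = w ⧢ 1 = w` and the recursion
`(au) ⧢ (bv) = a (u ⧢ bv) + b (au ⧢ v) + φ(a,b)(u ⧢ v)`. -/
def IsPhiShuffle (φ : Y → Y → (Y →₀ K))
    (m : (List Y →₀ K) →ₗ[K] (List Y →₀ K) →ₗ[K] (List Y →₀ K)) : Prop :=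
  (∀ w : List Y, m (word []) (word w) = word w) ∧
  (∀ w : List Y, m (word w) (word []) = word w) ∧
  ∀ (a b : Y) (u v : List Y),
    m (word (a :: u)) (word (b :: v)) =
      consL a (m (word u) (word (b :: v))) + consL b (m (word (a :: u)) (word v)) +
      (φ a b).sum fun c k => k • consL c (m (word u) (word v))

/-- Bilinear extension of `φ` to `KY`. -/
def phiExt (φ : Y → Y → (Y →₀ K)) (p q : Y →₀ K) : Y →₀ K :=
  p.sum fun a ka => q.sum fun b kb => (ka * kb) • φ a b

/-- The extension of `φ` to `KY ⊗ KY → KY` is associative. -/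
def PhiAssoc (φ : Y → Y → (Y →₀ K)) : Prop :=
  ∀ a b c : Y, phiExt φ (φ a b) (Finsupp.single c 1) = phiExt φ (Finsupp.single a 1) (φ b c)

/-- The extension of `φ` is commutative. -/
def PhiComm (φ : Y → Y → (Y →₀ K)) : Prop := ∀ a b : Y, φ a b = φ b a

/-- `φ` is dualizable: for every letter `z` only finitely many pairs of letters
have `z` in the support of their `φ`-product. -/
def PhiDualizable (φ : Y → Y → (Y →₀ K)) : Prop :=
  ∀ z : Y, {p : Y × Y | φ p.1 p.2 z ≠ 0}.Finite

/-- Extension of an associative `φ` to nonempty words: `φ(xw) = φ(x, φ(w))`. -/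
def phiWord (φ : Y → Y → (Y →₀ K)) : List Y → (Y →₀ K)
  | [] => 0
  | [x] => Finsupp.single x 1
  | x :: y :: w => (phiWord φ (y :: w)).sum fun b k => k • φ x b

/-- `φ` is moderate: for every letter `y`, only finitely many nonempty words `w`
satisfy `⟨y, φ(w)⟩ ≠ 0`. -/
def PhiModerate (φ : Y → Y → (Y →₀ K)) : Prop :=
  ∀ y : Y, {w : List Y | w ≠ [] ∧ phiWord φ w y ≠ 0}.Finite

/-- Pairing of two polynomials (the words form an orthonormal basis). -/
def pairPP (p q : List Y →₀ K) : K := p.sum fun w a => a * q w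

/-- Pairing `⟨S, p⟩` of a series with a polynomial. -/
def pairPS (S : List Y → K) (p : List Y →₀ K) : K := p.sum fun w a => a * S w

/-- Concatenation product on `K⟨Y⟩`. -/
def concP (p q : List Y →₀ K) : List Y →₀ K :=
  p.sum fun u a => q.sum fun v b => Finsupp.single (u ++ v) (a * b)

/-- Concatenation powers. -/
def concPow (p : List Y →₀ K) : ℕ → (List Y →₀ K)
  | 0 => word []
  | n + 1 => concP p (concPow p n)

/-- Powers with respect to a bilinear product `m`. -/
def mpow (m : (List Y →₀ K) →ₗ[K] (List Y →₀ K) →ₗ[K] (List Y →₀ K))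
    (p : List Y →₀ K) : ℕ → (List Y →₀ K)
  | 0 => word []
  | n + 1 => m p (mpow m p n)

/-- `m`-product of a list of polynomials. -/
def prodM (m : (List Y →₀ K) →ₗ[K] (List Y →₀ K) →ₗ[K] (List Y →₀ K))
    (L : List (List Y →₀ K)) : List Y →₀ K :=
  L.foldr (fun p acc => m p acc) (word [])

/-- The unit series. -/
def oneS : List Y → K := fun w => if w = [] then 1 else 0

/-- Concatenation (Cauchy) product of series. -/
def mulS (S T : List Y → K) : List Y → K := fun w =>
  ∑ i ∈ Finset.range (w.length + 1), S (w.take i) * T (w.drop i)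

/-- Concatenation powers of a series. -/
def powS (S : List Y → K) : ℕ → (List Y → K)
  | 0 => oneS
  | n + 1 => mulS S (powS S n)

/-- Concatenation product of a list of series. -/
def prodS (L : List (List Y → K)) : List Y → K := L.foldr (fun S acc => mulS S acc) oneS

/-- The coproduct `Δ_{⧢_φ}` dual to `m`, on series: `Δ(S)(u,v) = ⟨S, u ⧢_φ v⟩`. -/
def DeltaS (m : (List Y →₀ K) →ₗ[K] (List Y →₀ K) →ₗ[K] (List Y →₀ K))
    (S : List Y → K) : List Y × List Y → K :=
  fun p => pairPS S (m (word p.1) (word p.2))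

/-- `S` is primitive: `Δ_{⧢_φ}(S) = S ⊗ 1 + 1 ⊗ S`. -/
def PrimS (m : (List Y →₀ K) →ₗ[K] (List Y →₀ K) →ₗ[K] (List Y →₀ K))
    (S : List Y → K) : Prop :=
  ∀ u v : List Y, DeltaS m S (u, v) =
    (if v = [] then S u else 0) + (if u = [] then S v else 0)

/-- `S` is group-like: `⟨S,1⟩ = 1` and `Δ_{⧢_φ}(S) = S ⊗ S`. -/
def GroupLikeS (m : (List Y →₀ K) →ₗ[K] (List Y →₀ K) →ₗ[K] (List Y →₀ K))
    (S : List Y → K) : Prop :=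
  S [] = 1 ∧ ∀ u v : List Y, DeltaS m S (u, v) = S u * S v

/-- `Δfn` is the (finitely supported) dual coproduct witnessing dualizability of `m`:
`⟨u ⧢_φ v, w⟩ = ⟨u ⊗ v, Δ(w)⟩`. -/
def IsDualWitness (m : (List Y →₀ K) →ₗ[K] (List Y →₀ K) →ₗ[K] (List Y →₀ K))
    (Δfn : List Y → (List Y × List Y →₀ K)) : Prop :=
  ∀ u v w : List Y, (m (word u) (word v)) w = Δfn w (u, v)

/-- All factorizations of a word into nonempty blocks. -/
def cuts : List Y → List (List (List Y))
  | [] => [[]]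
  | a :: w =>
    (cuts w).flatMap fun parts =>
      match parts with
      | [] => [[[a]]]
      | p :: ps => [[a] :: p :: ps, (a :: p) :: ps]

/-- The extended Eulerian projector `π₁` on series:
`π₁(S) = Σ_{k≥1} ((-1)^{k-1}/k) Σ_{u_1⋯u_k = w, u_i ∈ Y⁺} ⟨S, u_1 ⧢_φ ⋯ ⧢_φ u_k⟩ w`. -/
def piOneS (m : (List Y →₀ K) →ₗ[K] (List Y →₀ K) →ₗ[K] (List Y →₀ K))
    (S : List Y → K) : List Y → K := fun w =>
  ((cuts w).map fun parts =>
    algebraMap ℚ K ((-1) ^ (parts.length - 1) / (parts.length : ℚ)) *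
      pairPS S (prodM m (parts.map word))).sum

/-- Logarithm of a series `S` with `⟨S,1⟩ = 1`. -/
def logS (S : List Y → K) : List Y → K := fun w =>
  ∑ n ∈ Finset.Icc 1 w.length,
    algebraMap ℚ K ((-1) ^ (n - 1) / (n : ℚ)) * powS (fun t => S t - oneS t) n w

/-- Convolution of endomorphisms (valued in series), using a dual coproduct witness. -/
def convT (Δfn : List Y → (List Y × List Y →₀ K))
    (f g : (List Y →₀ K) → (List Y → K)) : (List Y →₀ K) → (List Y → K) :=
  fun P w => P.sum fun t a =>
    a * (Δfn t).sum fun p c => c * mulS (f (word p.1)) (g (word p.2)) w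

/-- The convolution unit `e = 1 ∘ ε`. -/
def eT : (List Y →₀ K) → (List Y → K) := fun P w => if w = [] then P [] else 0

/-- Convolution powers `π₁^{⋆ n}` of the Eulerian projector. -/
def convPowPi (m : (List Y →₀ K) →ₗ[K] (List Y →₀ K) →ₗ[K] (List Y →₀ K))
    (Δfn : List Y → (List Y × List Y →₀ K)) : ℕ → ((List Y →₀ K) → (List Y → K))
  | 0 => eT
  | n + 1 => convT Δfn (fun P => piOneS m fun t => P t) (convPowPi m Δfn n)

/-- Lyndon words: nonempty and lexicographically smaller than each proper suffix. -/
def IsLyndon [LinearOrder Y] (w : List Y) : Prop :=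
  w ≠ [] ∧ ∀ u v : List Y, u ≠ [] → v ≠ [] → w = u ++ v → List.Lex (· < ·) w v

/-- Strictly decreasing lists of Lyndon words with positive exponents,
indexing monomials in Lyndon words. -/
abbrev DecLyn (Y : Type*) [LinearOrder Y] :=
  {s : List (List Y × ℕ) // (∀ p ∈ s, IsLyndon p.1 ∧ 0 < p.2) ∧
    s.Chain' fun a b => List.Lex (· < ·) b.1 a.1}

/-- `⧢_φ`-monomial `l₁^{⧢ i₁} ⧢ ⋯ ⧢ l_k^{⧢ i_k}`. -/
def shMonomial (m : (List Y →₀ K) →ₗ[K] (List Y →₀ K) →ₗ[K] (List Y →₀ K))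
    (s : List (List Y × ℕ)) : List Y →₀ K :=
  s.foldr (fun p acc => m (mpow m (word p.1) p.2) acc) (word [])

/-- Concatenation monomial `Π_{l₁}^{i₁} ⋯ Π_{l_k}^{i_k}` in a family `Pi`. -/
def concMonomial (Pi : List Y → (List Y →₀ K)) (s : List (List Y × ℕ)) : List Y →₀ K :=
  s.foldr (fun p acc => concP (concPow (Pi p.1) p.2) acc) (word [])

/-- The singleton index `l¹ ∈ DecLyn Y` attached to a Lyndon word. -/
def singleIdx [LinearOrder Y] (l : List Y) (hl : IsLyndon l) : DecLyn Y :=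
  ⟨[(l, 1)], ⟨fun p hp => by
      rw [List.mem_singleton] at hp; subst hp; exact ⟨hl, Nat.one_pos⟩,
    List.isChain_singleton _⟩⟩

/-- `(s, r)` is the standard factorization of the Lyndon word `l`:
`l = sr` with `s, r` nonempty and `r` the lexicographically least proper suffix. -/
def StdFact [LinearOrder Y] (l s r : List Y) : Prop :=
  l = s ++ r ∧ s ≠ [] ∧ r ≠ [] ∧
  ∀ s' r' : List Y, l = s' ++ r' → s' ≠ [] → r' ≠ [] → r = r' ∨ List.Lex (· < ·) r r'

/-- `Pi` is the family defined by `Π_y = π₁(y)` on letters and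
`Π_l = [Π_s, Π_r]` for the standard factorization `(s,r)` of a Lyndon word `l`. -/
def IsPiFamily [LinearOrder Y]
    (m : (List Y →₀ K) →ₗ[K] (List Y →₀ K) →ₗ[K] (List Y →₀ K))
    (Pi : List Y → (List Y →₀ K)) : Prop :=
  (∀ y : Y, ∀ w : List Y, Pi [y] w = piOneS m (fun t => (word [y] : List Y →₀ K) t) w) ∧
  ∀ l s r : List Y, IsLyndon l → StdFact l s r →
    Pi l = concP (Pi s) (Pi r) - concP (Pi r) (Pi s)

/-! ### Auxiliary lemmas -/
set_option linter.unusedSectionVars false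
set_option maxHeartbeats 1000000

section AuxBasic

variable (m : (List Y →₀ K) →ₗ[K] (List Y →₀ K) →ₗ[K] (List Y →₀ K))

lemma pairPS_word (S : List Y → K) (w : List Y) : pairPS S (word w) = S w := by
  classical
  simp [pairPS, word, Finsupp.sum_single_index]

lemma pairPS_zero (S : List Y → K) : pairPS S (0 : List Y →₀ K) = 0 := by
  simp [pairPS]

lemma pairPS_add (S : List Y → K) (P Q : List Y →₀ K) :
    pairPS S (P + Q) = pairPS S P + pairPS S Q :=
  Finsupp.sum_add_index' (by simp) (by intros; ring)

lemma pairPS_smul (S : List Y → K) (c : K) (P : List Y →₀ K) :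
    pairPS S (c • P) = c * pairPS S P := by
  classical
  rw [pairPS, Finsupp.sum_smul_index (by simp), pairPS, Finsupp.mul_sum]
  exact Finsupp.sum_congr fun w _ => by ring

lemma pairPS_finsetSum {ι : Type*} (S : List Y → K) (t : Finset ι) (F : ι → (List Y →₀ K)) :
    pairPS S (∑ x ∈ t, F x) = ∑ x ∈ t, pairPS S (F x) := by
  classical
  induction t using Finset.cons_induction with
  | empty => simp [pairPS_zero]
  | cons a t ha ih => rw [Finset.sum_cons, pairPS_add, ih, Finset.sum_cons]

lemma pairPS_finsuppSum {α : Type*} (S : List Y → K) (p : α →₀ K) (F : α → (List Y →₀ K)) :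
    pairPS S (p.sum fun c k => k • F c) = p.sum fun c k => k * pairPS S (F c) := by
  classical
  rw [Finsupp.sum, Finsupp.sum, pairPS_finsetSum]
  exact Finset.sum_congr rfl fun c _ => pairPS_smul _ _ _

lemma pairPS_consL (a : Y) (S : List Y → K) (X : List Y →₀ K) :
    pairPS S (consL a X) = pairPS (fun w => S (a :: w)) X := by
  classical
  rw [pairPS, consL, Finsupp.lmapDomain_apply]
  exact Finsupp.sum_mapDomain_index (by simp) (by intros; ring)

lemma pairPS_oneS (P : List Y →₀ K) : pairPS oneS P = P [] := by
  classical
  rw [pairPS]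
  have : (P.sum fun w a => a * oneS w) = P.sum fun w a => if w = [] then a else 0 :=
    Finsupp.sum_congr fun w _ => by by_cases h : w = [] <;> simp [oneS, h]
  rw [this, Finsupp.sum_ite_eq']
  split
  · rfl
  · exact (Finsupp.notMem_support_iff.mp (by assumption)).symm

/-- The deshuffle pairing of a series against a pair of words. -/
def PM (S : List Y → K) (u v : List Y) : K := pairPS S (m (word u) (word v))

/-- Left derivative of a series. -/
def dS (a : Y) (S : List Y → K) : List Y → K := fun w => S (a :: w)

variable {φ : Y → Y → (Y →₀ K)}

lemma PM_nil_left (hm : IsPhiShuffle φ m) (S : List Y → K) (v : List Y) :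
    PM m S [] v = S v := by rw [PM, hm.1, pairPS_word]

lemma PM_nil_right (hm : IsPhiShuffle φ m) (S : List Y → K) (u : List Y) :
    PM m S u [] = S u := by rw [PM, hm.2.1, pairPS_word]

lemma PM_cons (hm : IsPhiShuffle φ m) (S : List Y → K) (a b : Y) (u v : List Y) :
    PM m S (a :: u) (b :: v) =
      PM m (dS a S) u (b :: v) + PM m (dS b S) (a :: u) v +
      (φ a b).sum fun c k => k * PM m (dS c S) u v := by
  rw [PM, hm.2.2 a b u v, pairPS_add, pairPS_add, pairPS_consL, pairPS_consL,
    pairPS_finsuppSum]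
  congr 1
  exact Finsupp.sum_congr fun c _ => by rw [pairPS_consL]; rfl

lemma mulS_nil (S T : List Y → K) : mulS S T [] = S [] * T [] := by
  simp [mulS]

lemma mulS_cons (a : Y) (S T : List Y → K) (w : List Y) :
    mulS S T (a :: w) = S [] * T (a :: w) + mulS (dS a S) T w := by
  rw [mulS]
  simp only [List.length_cons]
  rw [Finset.sum_range_succ']
  simp only [List.take_succ_cons, List.drop_succ_cons, List.take_zero, List.drop_zero]
  rw [add_comm]
  rfl

lemma mulS_oneS (S : List Y → K) : mulS S oneS = S := by
  funext w
  rw [mulS, Finset.sum_range_succ]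
  have h1 : ∀ i ∈ Finset.range w.length, S (w.take i) * oneS (w.drop i) = 0 := by
    intro i hi
    have : w.drop i ≠ [] := fun h =>
      absurd (List.drop_eq_nil_iff.mp h) (by have := Finset.mem_range.mp hi; omega)
    simp [oneS, this]
  rw [Finset.sum_eq_zero h1]
  simp [oneS]

lemma PM_dS_mulS (a : Y) (S T : List Y → K) (u v : List Y) :
    PM m (dS a (mulS S T)) u v = S [] * PM m (dS a T) u v + PM m (mulS (dS a S) T) u v := by
  rw [PM, PM, PM, pairPS, pairPS, pairPS, Finsupp.mul_sum, ← Finsupp.sum_add]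
  exact Finsupp.sum_congr fun w _ => by
    rw [show dS a (mulS S T) w = S [] * dS a T w + mulS (dS a S) T w from mulS_cons a S T w]
    ring

lemma primS_nil {S : List Y → K} (hm : IsPhiShuffle φ m) (hS : PrimS m S) : S [] = 0 := by
  have h := hS [] []
  rw [DeltaS] at h
  simp only [hm.1, pairPS_word, if_pos rfl] at h
  exact add_eq_right.mp h.symm

lemma finsuppSum_finsetSum {ι : Type*} (p : Y →₀ K) (s : Finset ι) (g : Y → K → ι → K) :
    (p.sum fun c k => ∑ j ∈ s, g c k j) = ∑ j ∈ s, p.sum fun c k => g c k j := by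
  classical
  simp only [Finsupp.sum]
  exact Finset.sum_comm

lemma peel2 (B : ℕ → ℕ → K) (n₁ n₂ : ℕ) :
    (∑ j ∈ Finset.range (n₁+1+1), ∑ k ∈ Finset.range (n₂+1+1), B j k)
      = (∑ j ∈ Finset.range (n₁+1), ∑ k ∈ Finset.range (n₂+1), B (j+1) (k+1))
        + (∑ j ∈ Finset.range (n₁+1), B (j+1) 0)
        + ((∑ k ∈ Finset.range (n₂+1), B 0 (k+1)) + B 0 0) := by
  rw [Finset.sum_range_succ' (fun j => ∑ k ∈ Finset.range (n₂+1+1), B j k) (n₁+1)]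
  have h1 : ∀ j, (∑ k ∈ Finset.range (n₂+1+1), B j k)
      = (∑ k ∈ Finset.range (n₂+1), B j (k+1)) + B j 0 := fun j =>
    Finset.sum_range_succ' (B j) (n₂+1)
  simp only [h1]
  rw [Finset.sum_add_distrib]
  try ring

lemma peelInner (B : ℕ → ℕ → K) (M n₂ : ℕ) :
    (∑ j ∈ Finset.range M, ∑ k ∈ Finset.range (n₂+1+1), B j k)
      = (∑ j ∈ Finset.range M, ∑ k ∈ Finset.range (n₂+1), B j (k+1))
        + ∑ j ∈ Finset.range M, B j 0 := by
  have h1 : ∀ j, (∑ k ∈ Finset.range (n₂+1+1), B j k)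
      = (∑ k ∈ Finset.range (n₂+1), B j (k+1)) + B j 0 := fun j =>
    Finset.sum_range_succ' (B j) (n₂+1)
  simp only [h1]
  rw [Finset.sum_add_distrib]

lemma lemB (hm : IsPhiShuffle φ m) :
    ∀ (N : ℕ) (u v : List Y), u.length + v.length ≤ N → ∀ S T : List Y → K,
      PM m (mulS S T) u v =
        ∑ j ∈ Finset.range (u.length + 1), ∑ k ∈ Finset.range (v.length + 1),
          PM m S (u.take j) (v.take k) * PM m T (u.drop j) (v.drop k) := by
  intro N
  induction N with
  | zero =>
    intro u v h S T
    have hu : u = [] := List.length_eq_zero_iff.mp (by omega)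
    have hv : v = [] := List.length_eq_zero_iff.mp (by omega)
    subst hu; subst hv
    simp only [List.length_nil, Nat.zero_add, Finset.sum_range_one, List.take_nil,
      List.drop_nil, PM_nil_left m hm, mulS_nil]
  | succ N ih =>
    intro u v h S T
    match u, v with
    | [], v =>
      rw [PM_nil_left m hm]
      simp only [List.take_nil, List.drop_nil, List.length_nil, Nat.zero_add,
        Finset.sum_range_one]
      rw [mulS]
      exact Finset.sum_congr rfl fun k _ => by rw [PM_nil_left m hm, PM_nil_left m hm]
    | a :: u, [] =>
      rw [PM_nil_right m hm]
      simp only [List.length_nil, Nat.zero_add, Finset.sum_range_one, List.take_nil,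
        List.drop_nil]
      rw [mulS]
      exact Finset.sum_congr rfl fun k _ => by rw [PM_nil_right m hm, PM_nil_right m hm]
    | a :: u, b :: v =>
      have hlen : u.length + v.length + 2 ≤ N + 1 := by
        simpa [Nat.add_assoc, Nat.add_comm, Nat.add_left_comm] using h
      have hu : u.length + (b :: v).length ≤ N := by simp; omega
      have hv : (a :: u).length + v.length ≤ N := by simp; omega
      have huv : u.length + v.length ≤ N := by omega
      -- expand the left-hand side
      rw [PM_cons m hm, PM_dS_mulS, PM_dS_mulS]
      have eφ : ((φ a b).sum fun c kc => kc * PM m (dS c (mulS S T)) u v)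
          = S [] * ((φ a b).sum fun c kc => kc * PM m (dS c T) u v)
            + (φ a b).sum fun c kc => kc * PM m (mulS (dS c S) T) u v := by
        rw [Finsupp.mul_sum, ← Finsupp.sum_add]
        exact Finsupp.sum_congr fun c _ => by rw [PM_dS_mulS]; ring
      rw [eφ]
      have hA : PM m (mulS (dS a S) T) u (b :: v)
          = (∑ j ∈ Finset.range (u.length+1), ∑ k ∈ Finset.range (v.length+1),
              PM m (dS a S) (u.take j) (b :: v.take k) * PM m T (u.drop j) (v.drop k))
            + ∑ j ∈ Finset.range (u.length+1),
                PM m (dS a S) (u.take j) [] * PM m T (u.drop j) (b :: v) := by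
        rw [ih u (b :: v) hu (dS a S) T]
        simp only [List.length_cons]
        rw [peelInner (fun j k => PM m (dS a S) (u.take j) ((b :: v).take k)
              * PM m T (u.drop j) ((b :: v).drop k)) (u.length+1) v.length]
        simp only [List.take_succ_cons, List.drop_succ_cons, List.take_zero, List.drop_zero]
      have hB : PM m (mulS (dS b S) T) (a :: u) v
          = (∑ j ∈ Finset.range (u.length+1), ∑ k ∈ Finset.range (v.length+1),
              PM m (dS b S) (a :: u.take j) (v.take k) * PM m T (u.drop j) (v.drop k))
            + ∑ k ∈ Finset.range (v.length+1),
                PM m (dS b S) [] (v.take k) * PM m T (a :: u) (v.drop k) := by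
        rw [ih (a :: u) v hv (dS b S) T]
        simp only [List.length_cons]
        rw [Finset.sum_range_succ' (fun j => ∑ k ∈ Finset.range (v.length+1),
              PM m (dS b S) ((a :: u).take j) (v.take k)
                * PM m T ((a :: u).drop j) (v.drop k)) (u.length+1)]
        simp only [List.take_succ_cons, List.drop_succ_cons, List.take_zero, List.drop_zero]
        try ring
      have eφ2 : ((φ a b).sum fun c kc => kc * PM m (mulS (dS c S) T) u v)
          = ∑ j ∈ Finset.range (u.length+1), ∑ k ∈ Finset.range (v.length+1),
              ((φ a b).sum fun c kc => kc * PM m (dS c S) (u.take j) (v.take k))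
                * PM m T (u.drop j) (v.drop k) := by
        have e1 : ((φ a b).sum fun c kc => kc * PM m (mulS (dS c S) T) u v)
            = (φ a b).sum fun c kc => ∑ j ∈ Finset.range (u.length+1),
                ∑ k ∈ Finset.range (v.length+1),
                kc * (PM m (dS c S) (u.take j) (v.take k) * PM m T (u.drop j) (v.drop k)) := by
          refine Finsupp.sum_congr fun c _ => ?_
          rw [ih u v huv (dS c S) T, Finset.mul_sum]
          exact Finset.sum_congr rfl fun j _ => Finset.mul_sum _ _ _
        rw [e1, finsuppSum_finsetSum]
        refine Finset.sum_congr rfl fun j _ => ?_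
        rw [finsuppSum_finsetSum]
        refine Finset.sum_congr rfl fun k _ => ?_
        rw [Finsupp.sum_mul]
        exact Finsupp.sum_congr fun c _ => by ring
      rw [hA, hB, eφ2]
      -- expand the right-hand side
      simp only [List.length_cons]
      rw [peel2 (fun j k => PM m S ((a :: u).take j) ((b :: v).take k)
            * PM m T ((a :: u).drop j) ((b :: v).drop k)) u.length v.length]
      simp only [List.take_succ_cons, List.drop_succ_cons, List.take_zero, List.drop_zero]
      have hBlock4 : (∑ j ∈ Finset.range (u.length+1), ∑ k ∈ Finset.range (v.length+1),
            PM m S (a :: u.take j) (b :: v.take k) * PM m T (u.drop j) (v.drop k))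
          = (∑ j ∈ Finset.range (u.length+1), ∑ k ∈ Finset.range (v.length+1),
              PM m (dS a S) (u.take j) (b :: v.take k) * PM m T (u.drop j) (v.drop k))
            + (∑ j ∈ Finset.range (u.length+1), ∑ k ∈ Finset.range (v.length+1),
              PM m (dS b S) (a :: u.take j) (v.take k) * PM m T (u.drop j) (v.drop k))
            + (∑ j ∈ Finset.range (u.length+1), ∑ k ∈ Finset.range (v.length+1),
              ((φ a b).sum fun c kc => kc * PM m (dS c S) (u.take j) (v.take k))
                * PM m T (u.drop j) (v.drop k)) := by
        have point : ∀ j k : ℕ,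
            PM m S (a :: u.take j) (b :: v.take k) * PM m T (u.drop j) (v.drop k)
              = PM m (dS a S) (u.take j) (b :: v.take k) * PM m T (u.drop j) (v.drop k)
                + PM m (dS b S) (a :: u.take j) (v.take k) * PM m T (u.drop j) (v.drop k)
                + ((φ a b).sum fun c kc => kc * PM m (dS c S) (u.take j) (v.take k))
                    * PM m T (u.drop j) (v.drop k) := by
          intro j k
          rw [PM_cons m hm]
          ring
        calc (∑ j ∈ Finset.range (u.length+1), ∑ k ∈ Finset.range (v.length+1),
            PM m S (a :: u.take j) (b :: v.take k) * PM m T (u.drop j) (v.drop k))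
            = ∑ j ∈ Finset.range (u.length+1), ∑ k ∈ Finset.range (v.length+1),
                (PM m (dS a S) (u.take j) (b :: v.take k) * PM m T (u.drop j) (v.drop k)
                + PM m (dS b S) (a :: u.take j) (v.take k) * PM m T (u.drop j) (v.drop k)
                + ((φ a b).sum fun c kc => kc * PM m (dS c S) (u.take j) (v.take k))
                    * PM m T (u.drop j) (v.drop k)) :=
              Finset.sum_congr rfl fun j _ => Finset.sum_congr rfl fun k _ => point j k
          _ = _ := by simp only [Finset.sum_add_distrib]
      rw [hBlock4, PM_nil_left m hm, PM_cons m hm]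
      simp only [PM_nil_left m hm, PM_nil_right m hm, dS]
      ring

lemma primS_pair {S : List Y → K} (hS : PrimS m S) (x y : List Y) :
    PM m S x y = (if y = [] then S x else 0) + (if x = [] then S y else 0) :=
  hS x y

lemma sum_take_nil (v : List Y) (g : ℕ → K) :
    (∑ k ∈ Finset.range (v.length + 1), if v.take k = [] then g k else 0) = g 0 := by
  rw [Finset.sum_range_succ' (fun k => if v.take k = [] then g k else 0) v.length]
  have h : ∀ k ∈ Finset.range v.length, (if v.take (k+1) = [] then g (k+1) else 0) = 0 := by
    intro k hk
    rw [if_neg]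
    intro hnil
    rcases List.take_eq_nil_iff.mp hnil with h1 | h1
    · exact Nat.succ_ne_zero k h1
    · rw [h1] at hk; simp at hk
  rw [Finset.sum_eq_zero h, List.take_zero, if_pos rfl, zero_add]

/-- The polynomial `Σ_j ⟨S, take j w⟩ (drop j w)`. -/
def DLw (S : List Y → K) (w : List Y) : List Y →₀ K :=
  ∑ j ∈ Finset.range (w.length + 1), S (w.take j) • word (w.drop j)

lemma pairPS_DLw (U S : List Y → K) (w : List Y) :
    pairPS U (DLw S w) = mulS S U w := by
  rw [DLw, pairPS_finsetSum, mulS]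
  exact Finset.sum_congr rfl fun j _ => by rw [pairPS_smul, pairPS_word]

lemma pairPS_m_DLw_left (S T : List Y → K) (u v : List Y) :
    pairPS T (m (DLw S u) (word v))
      = ∑ j ∈ Finset.range (u.length + 1), S (u.take j) * PM m T (u.drop j) v := by
  rw [DLw, map_sum, LinearMap.sum_apply, pairPS_finsetSum]
  exact Finset.sum_congr rfl fun j _ => by
    rw [map_smul, LinearMap.smul_apply, pairPS_smul]; rfl

lemma pairPS_m_DLw_right (S T : List Y → K) (u v : List Y) :
    pairPS T (m (word u) (DLw S v))
      = ∑ k ∈ Finset.range (v.length + 1), S (v.take k) * PM m T u (v.drop k) := by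
  rw [DLw, map_sum, pairPS_finsetSum]
  exact Finset.sum_congr rfl fun k _ => by
    rw [map_smul, pairPS_smul]; rfl

lemma splitW (hm : IsPhiShuffle φ m) {S : List Y → K} (hS : PrimS m S)
    (T : List Y → K) (u v : List Y) :
    PM m (mulS S T) u v
      = pairPS T (m (DLw S u) (word v)) + pairPS T (m (word u) (DLw S v)) := by
  rw [lemB m hm (u.length + v.length) u v le_rfl S T, pairPS_m_DLw_left,
    pairPS_m_DLw_right]
  have e1 : ∀ j k : ℕ, PM m S (u.take j) (v.take k) * PM m T (u.drop j) (v.drop k)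
      = (if v.take k = [] then S (u.take j) * PM m T (u.drop j) (v.drop k) else 0)
        + (if u.take j = [] then S (v.take k) * PM m T (u.drop j) (v.drop k) else 0) := by
    intro j k
    rw [primS_pair m hS]
    split <;> split <;> ring
  calc (∑ j ∈ Finset.range (u.length + 1), ∑ k ∈ Finset.range (v.length + 1),
        PM m S (u.take j) (v.take k) * PM m T (u.drop j) (v.drop k))
      = (∑ j ∈ Finset.range (u.length + 1), ∑ k ∈ Finset.range (v.length + 1),
          ((if v.take k = [] then S (u.take j) * PM m T (u.drop j) (v.drop k) else 0)
            + (if u.take j = [] then S (v.take k) * PM m T (u.drop j) (v.drop k) else 0))) :=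
        Finset.sum_congr rfl fun j _ => Finset.sum_congr rfl fun k _ => e1 j k
    _ = (∑ j ∈ Finset.range (u.length + 1), ∑ k ∈ Finset.range (v.length + 1),
          (if v.take k = [] then S (u.take j) * PM m T (u.drop j) (v.drop k) else 0))
        + ∑ j ∈ Finset.range (u.length + 1), ∑ k ∈ Finset.range (v.length + 1),
          (if u.take j = [] then S (v.take k) * PM m T (u.drop j) (v.drop k) else 0) := by
        simp only [Finset.sum_add_distrib]
    _ = _ := by
        congr 1
        · refine Finset.sum_congr rfl fun j _ => ?_
          rw [sum_take_nil v (fun k => S (u.take j) * PM m T (u.drop j) (v.drop k))]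
          rw [List.drop_zero]
        · rw [Finset.sum_comm]
          refine Finset.sum_congr rfl fun k _ => ?_
          rw [sum_take_nil u (fun j => S (v.take k) * PM m T (u.drop j) (v.drop k))]
          rw [List.drop_zero]

/-- Linear extension of `DLw`. -/
def DL (S : List Y → K) (P : List Y →₀ K) : List Y →₀ K :=
  P.sum fun w c => c • DLw S w

lemma DL_word (S : List Y → K) (w : List Y) : DL S (word w) = DLw S w := by
  rw [DL, word, Finsupp.sum_single_index (by simp), one_smul]

lemma DL_zero (S : List Y → K) : DL S 0 = 0 := Finsupp.sum_zero_index

lemma DL_add (S : List Y → K) (P Q : List Y →₀ K) :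
    DL S (P + Q) = DL S P + DL S Q :=
  Finsupp.sum_add_index' (by simp) (by intros; rw [add_smul])

lemma DL_smul (S : List Y → K) (c : K) (P : List Y →₀ K) :
    DL S (c • P) = c • DL S P := by
  rw [DL, Finsupp.sum_smul_index (by simp), DL, Finsupp.smul_sum]
  exact Finsupp.sum_congr fun w _ => by rw [mul_smul]

lemma pairPS_DL (U S : List Y → K) (P : List Y →₀ K) :
    pairPS U (DL S P) = pairPS (mulS S U) P := by
  rw [DL, pairPS_finsuppSum, pairPS]
  exact Finsupp.sum_congr fun w _ => by rw [pairPS_DLw]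

lemma splitP (hm : IsPhiShuffle φ m) {S : List Y → K} (hS : PrimS m S)
    (T : List Y → K) (P Q : List Y →₀ K) :
    pairPS (mulS S T) (m P Q)
      = pairPS T (m (DL S P) Q) + pairPS T (m P (DL S Q)) := by
  induction P using Finsupp.induction_linear with
  | zero => simp [pairPS_zero, DL_zero]
  | add P P' hP hP' =>
    simp only [DL_add, map_add, LinearMap.add_apply, pairPS_add, hP, hP']
    ring
  | single w c =>
    have hw : (Finsupp.single w c : List Y →₀ K) = c • word w := by
      rw [word, Finsupp.smul_single, smul_eq_mul, mul_one]
    simp only [hw, DL_smul, map_smul, LinearMap.smul_apply, pairPS_smul]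
    rw [← mul_add]
    congr 1
    -- now P = word w; induct on Q
    induction Q using Finsupp.induction_linear with
    | zero => simp [pairPS_zero, DL_zero]
    | add Q Q' hQ hQ' =>
      simp only [DL_add, map_add, LinearMap.add_apply, pairPS_add, hQ, hQ']
      ring
    | single y d =>
      have hy : (Finsupp.single y d : List Y →₀ K) = d • word y := by
        rw [word, Finsupp.smul_single, smul_eq_mul, mul_one]
      simp only [hy, DL_smul, map_smul, LinearMap.smul_apply, pairPS_smul]
      rw [← mul_add]
      congr 1
      rw [DL_word, DL_word]
      exact splitW m hm hS T w y

/-- All ways of splitting a list into a pair of complementary subsequences. -/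
def allSplits {α : Type*} : List α → List (List α × List α)
  | [] => [([], [])]
  | a :: l => (allSplits l).flatMap fun p => [(a :: p.1, p.2), (p.1, a :: p.2)]

lemma allSplits_mem_fst {α : Type*} : ∀ (L : List α) (p : List α × List α),
    p ∈ allSplits L → ∀ x, (x ∈ p.1 → x ∈ L) ∧ (x ∈ p.2 → x ∈ L)
  | [], p, hp, x => by
    simp only [allSplits, List.mem_singleton] at hp
    subst hp; simp
  | a :: l, p, hp, x => by
    simp only [allSplits, List.mem_flatMap] at hp
    obtain ⟨q, hq, hpq⟩ := hp
    have h := allSplits_mem_fst l q hq x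
    simp only [List.mem_cons, List.not_mem_nil, or_false] at hpq
    rcases hpq with h1 | h1 <;> subst h1 <;> refine ⟨fun hx => ?_, fun hx => ?_⟩ <;>
      simp only [List.mem_cons] at hx ⊢ <;> tauto

lemma allSplits_length {α : Type*} : ∀ (L : List α) (p : List α × List α),
    p ∈ allSplits L → p.1.length + p.2.length = L.length
  | [], p, hp => by
    simp only [allSplits, List.mem_singleton] at hp
    subst hp; simp
  | a :: l, p, hp => by
    simp only [allSplits, List.mem_flatMap] at hp
    obtain ⟨q, hq, hpq⟩ := hp
    have h := allSplits_length l q hq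
    simp only [List.mem_cons, List.not_mem_nil, or_false] at hpq
    rcases hpq with h1 | h1 <;> subst h1 <;> simp <;> omega

lemma sum_map_flatMap {α β : Type*} (g : α → List β) (f : β → K) :
    ∀ (l : List α), (((l.flatMap g).map f).sum : K)
      = (l.map fun a => ((g a).map f).sum).sum
  | [] => by simp
  | a :: l => by
    simp only [List.flatMap_cons, List.map_append, List.sum_append, List.map_cons,
      List.sum_cons, sum_map_flatMap g f l]

lemma sum_map_allSplits_cons {α : Type*} (a : α) (l : List α) (f : List α × List α → K) :
    ((allSplits (a :: l)).map f).sum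
      = ((allSplits l).map fun p => f (a :: p.1, p.2) + f (p.1, a :: p.2)).sum := by
  rw [allSplits, sum_map_flatMap]
  refine congrArg List.sum (List.map_congr_left fun p _ => ?_)
  simp

lemma m_word_nil (hm : IsPhiShuffle φ m) : ∀ u v : List Y,
    (m (word u) (word v)) [] = word u [] * word v []
  | [], v => by
    rw [hm.1]
    have : (word [] : List Y →₀ K) [] = 1 := by simp [word]
    rw [this, one_mul]
  | a :: u, [] => by
    rw [hm.2.1]
    have h1 : (word [] : List Y →₀ K) [] = 1 := by simp [word]
    have h2 : (word (a :: u) : List Y →₀ K) [] = 0 := by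
      simp [word, Finsupp.single_apply]
    rw [h1, h2, mul_one]
  | a :: u, b :: v => by
    rw [hm.2.2]
    have hc : ∀ (c : Y) (X : List Y →₀ K), (consL c X) [] = 0 := by
      intro c X
      rw [consL, Finsupp.lmapDomain_apply]
      exact Finsupp.mapDomain_notin_range X [] (by simp)
    have h2 : (word (a :: u) : List Y →₀ K) [] = 0 := by
      simp [word, Finsupp.single_apply]
    rw [Finsupp.add_apply, Finsupp.add_apply, Finsupp.sum_apply, hc, hc, h2, zero_mul]
    have hz : ((φ a b).sum fun c k => (k • consL c ((m (word u)) (word v))) []) = 0 := by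
      rw [show ((φ a b).sum fun c k => (k • consL c ((m (word u)) (word v))) [])
          = (φ a b).sum fun _ _ => (0 : K) from
        Finsupp.sum_congr fun c _ => by rw [Finsupp.smul_apply, hc, smul_zero]]
      exact Finset.sum_const_zero
    rw [hz]
    ring

lemma m_nil_apply (hm : IsPhiShuffle φ m) (P Q : List Y →₀ K) :
    (m P Q) [] = P [] * Q [] := by
  induction P using Finsupp.induction_linear with
  | zero => simp
  | add P P' hP hP' =>
    simp only [map_add, LinearMap.add_apply, Finsupp.add_apply, hP, hP']
    ring
  | single w c =>
    have hw : (Finsupp.single w c : List Y →₀ K) = c • word w := by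
      rw [word, Finsupp.smul_single, smul_eq_mul, mul_one]
    rw [hw]
    induction Q using Finsupp.induction_linear with
    | zero => simp
    | add Q Q' hQ hQ' =>
      simp only [map_add, Finsupp.add_apply, hQ, hQ', mul_add]
    | single y d =>
      have hy : (Finsupp.single y d : List Y →₀ K) = d • word y := by
        rw [word, Finsupp.smul_single, smul_eq_mul, mul_one]
      rw [hy]
      simp only [map_smul, LinearMap.smul_apply, Finsupp.smul_apply, smul_eq_mul,
        m_word_nil m hm]
      ring

lemma lemBB (hm : IsPhiShuffle φ m) : ∀ (L : List (List Y → K)),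
    (∀ S ∈ L, PrimS m S) → ∀ P Q : List Y →₀ K,
    pairPS (prodS L) (m P Q)
      = ((allSplits L).map fun p => pairPS (prodS p.1) P * pairPS (prodS p.2) Q).sum
  | [], _, P, Q => by
    simp only [allSplits, List.map_cons, List.map_nil, List.sum_cons, List.sum_nil,
      add_zero]
    have h1 : prodS ([] : List (List Y → K)) = oneS := rfl
    rw [h1, pairPS_oneS, pairPS_oneS, pairPS_oneS, m_nil_apply m hm]
  | S :: L, hL, P, Q => by
    have hS : PrimS m S := hL S List.mem_cons_self
    have hL' : ∀ T ∈ L, PrimS m T := fun T hT => hL T (List.mem_cons_of_mem S hT)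
    have : prodS (S :: L) = mulS S (prodS L) := rfl
    rw [this, splitP m hm hS (prodS L) P Q, lemBB hm L hL' (DL S P) Q,
      lemBB hm L hL' P (DL S Q), sum_map_allSplits_cons]
    rw [← List.sum_map_add]
    refine congrArg List.sum (List.map_congr_left fun p hp => ?_)
    have e1 : pairPS (prodS (S :: p.1)) P = pairPS (prodS p.1) (DL S P) := by
      rw [pairPS_DL]; rfl
    have e2 : pairPS (prodS (S :: p.2)) Q = pairPS (prodS p.2) (DL S Q) := by
      rw [pairPS_DL]; rfl
    rw [e1, e2]

/-- The iterated split sum. -/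
def GG : List (List Y →₀ K) → List (List Y → K) → K
  | [], L => prodS L []
  | P :: Ps, L => ((allSplits L).map fun p => pairPS (prodS p.1) P * GG Ps p.2).sum

lemma claimF (hm : IsPhiShuffle φ m) : ∀ (Ps : List (List Y →₀ K)) (L : List (List Y → K)),
    (∀ S ∈ L, PrimS m S) → pairPS (prodS L) (prodM m Ps) = GG Ps L
  | [], L, _ => by
    have : prodM m ([] : List (List Y →₀ K)) = word [] := rfl
    rw [this, pairPS_word, GG]
  | P :: Ps, L, hL => by
    have : prodM m (P :: Ps) = m P (prodM m Ps) := rfl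
    rw [this, lemBB m hm L hL P (prodM m Ps), GG]
    refine congrArg List.sum (List.map_congr_left fun p hp => ?_)
    rw [claimF hm Ps p.2 fun T hT => hL T ((allSplits_mem_fst L p hp T).2 hT)]

lemma mem_allSplits_cons_left {α : Type*} {a : α} {l : List α} {p : List α × List α}
    (hp : p ∈ allSplits l) : (a :: p.1, p.2) ∈ allSplits (a :: l) := by
  simp only [allSplits, List.mem_flatMap]
  exact ⟨p, hp, by simp⟩

lemma mem_allSplits_cons_right {α : Type*} {a : α} {l : List α} {p : List α × List α}
    (hp : p ∈ allSplits l) : (p.1, a :: p.2) ∈ allSplits (a :: l) := by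
  simp only [allSplits, List.mem_flatMap]
  exact ⟨p, hp, by simp⟩

lemma EL0 {α : Type*} : ∀ (L : List α) (f : List α × List α → K),
    (∀ p ∈ allSplits L, p.1 ≠ [] → f p = 0) →
    ((allSplits L).map f).sum = f ([], L)
  | [], f, hf => by simp [allSplits]
  | a :: l, f, hf => by
    rw [sum_map_allSplits_cons, List.sum_map_add]
    have h1 : ((allSplits l).map fun p => f (a :: p.1, p.2)).sum = 0 := by
      refine List.sum_eq_zero fun x hx => ?_
      rw [List.mem_map] at hx
      obtain ⟨p, hp, rfl⟩ := hx
      exact hf _ (mem_allSplits_cons_left hp) (by simp)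
    have h2 : ((allSplits l).map fun p => f (p.1, a :: p.2)).sum = f ([], a :: l) := by
      rw [EL0 l (fun p => f (p.1, a :: p.2))
        (fun p hp hne => hf _ (mem_allSplits_cons_right hp) hne)]
    rw [h1, h2, zero_add]

lemma EL {α : Type*} : ∀ (L : List α) (f : List α × List α → K),
    (∀ p ∈ allSplits L, p.1.length ≠ 1 → f p = 0) →
    ((allSplits L).map f).sum
      = ∑ j ∈ Finset.range L.length, f ((L.drop j).take 1, L.eraseIdx j)
  | [], f, hf => by
    simp only [allSplits, List.map_cons, List.map_nil, List.sum_cons, List.sum_nil,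
      add_zero, List.length_nil, Finset.range_zero, Finset.sum_empty]
    exact hf ([], []) (by simp [allSplits]) (by simp)
  | a :: l, f, hf => by
    rw [sum_map_allSplits_cons, List.sum_map_add]
    have h1 : ((allSplits l).map fun p => f (a :: p.1, p.2)).sum = f ([a], l) := by
      rw [EL0 l (fun p => f (a :: p.1, p.2))
        (fun p hp hne => hf _ (mem_allSplits_cons_left hp) (by simp [hne]))]
    have h2 : ((allSplits l).map fun p => f (p.1, a :: p.2)).sum
        = ∑ j ∈ Finset.range l.length, f ((l.drop j).take 1, a :: l.eraseIdx j) := by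
      rw [EL l (fun p => f (p.1, a :: p.2))
        (fun p hp hne => hf _ (mem_allSplits_cons_right hp) hne)]
    rw [h1, h2, List.length_cons,
      Finset.sum_range_succ' (fun j => f (((a :: l).drop j).take 1, (a :: l).eraseIdx j))
        l.length]
    simp only [List.drop_succ_cons, List.eraseIdx_cons_succ, List.drop_zero,
      List.eraseIdx_cons_zero, List.take_succ_cons, List.take_zero]
    ring

lemma pairPS_prodS_nil (P : List Y →₀ K) :
    pairPS (prodS ([] : List (List Y → K))) P = P [] := by
  have h1 : prodS ([] : List (List Y → K)) = oneS := rfl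
  rw [h1, pairPS_oneS]

lemma H1 : ∀ (Ps : List (List Y →₀ K)) (L : List (List Y → K)),
    (∀ P ∈ Ps, P ([] : List Y) = 0) → L.length < Ps.length → GG Ps L = 0
  | [], L, _, h => absurd h (by simp)
  | P :: Ps, L, hP, h => by
    rw [GG]
    refine List.sum_eq_zero fun x hx => ?_
    rw [List.mem_map] at hx
    obtain ⟨p, hp, rfl⟩ := hx
    rcases eq_or_ne p.1 [] with h1 | h1
    · have e : pairPS (prodS p.1) P = P [] := by rw [h1, pairPS_prodS_nil]
      rw [e, hP P List.mem_cons_self, zero_mul]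
    · have hlen := allSplits_length L p hp
      have h2 : 1 ≤ p.1.length :=
        Nat.one_le_iff_ne_zero.mpr fun hz => h1 (List.length_eq_zero_iff.mp hz)
      have h3 : p.2.length < Ps.length := by
        simp only [List.length_cons] at h
        omega
      rw [H1 Ps p.2 (fun Q hQ => hP Q (List.mem_cons_of_mem P hQ)) h3, mul_zero]

lemma eraseIdx_ofFn {α : Type*} {n : ℕ} (f : Fin (n + 1) → α) (i : Fin (n + 1)) :
    (List.ofFn f).eraseIdx i.val = List.ofFn (fun j : Fin n => f (i.succAbove j)) := by
  apply List.ext_getElem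
  · rw [List.length_eraseIdx]
    simp [i.isLt]
  · intro j h1 h2
    have hj : j < n := by simpa using h2
    rcases Nat.lt_or_ge j i.val with hc | hc
    · rw [List.getElem_eraseIdx, dif_pos hc, List.getElem_ofFn, List.getElem_ofFn]
      congr 1
      apply Fin.ext
      simp only [Fin.succAbove]
      have hcs : (⟨j, hj⟩ : Fin n).castSucc < i := by
        rw [Fin.lt_def]
        simpa using hc
      rw [if_pos hcs]
      rfl
    · rw [List.getElem_eraseIdx, dif_neg (Nat.not_lt.mpr hc), List.getElem_ofFn,
        List.getElem_ofFn]
      congr 1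
      apply Fin.ext
      simp only [Fin.succAbove]
      have hcs : ¬ (⟨j, hj⟩ : Fin n).castSucc < i := by
        rw [Fin.lt_def]
        simpa using Nat.not_lt.mpr hc
      rw [if_neg hcs]
      rfl

lemma sumPermComp {n : ℕ} (F F' : Fin n → Fin (n + 1)) (hF : Function.Injective F)
    (hF' : Function.Injective F') (hr : Set.range F = Set.range F')
    (g : Fin n → Fin (n + 1) → K) :
    (∑ e : Equiv.Perm (Fin n), ∏ k, g k (F (e k)))
      = ∑ e : Equiv.Perm (Fin n), ∏ k, g k (F' (e k)) := by
  classical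
  let τ : Fin n ≃ Fin n :=
    (Equiv.ofInjective F hF).trans ((Equiv.setCongr hr).trans (Equiv.ofInjective F' hF').symm)
  have hτ : ∀ k, F' (τ k) = F k := by
    intro k
    have := Equiv.apply_ofInjective_symm hF'
      ((Equiv.setCongr hr) (Equiv.ofInjective F hF k))
    simpa [τ] using this
  have step : ∀ e : Equiv.Perm (Fin n), (∏ k, g k (F (e k))) = ∏ k, g k (F' ((τ * e) k)) := by
    intro e
    refine Finset.prod_congr rfl fun k _ => ?_
    rw [Equiv.Perm.mul_apply, hτ]
  rw [Finset.sum_congr rfl fun e _ => step e]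
  exact Fintype.sum_equiv (Equiv.mulLeft τ) _ _ fun e => rfl

lemma range_swapSucc {n : ℕ} (p : Fin (n + 1)) :
    Set.range (fun k : Fin n => Equiv.swap 0 p k.succ) = {p}ᶜ := by
  ext x
  simp only [Set.mem_range, Set.mem_compl_iff, Set.mem_singleton_iff]
  constructor
  · rintro ⟨k, rfl⟩ h
    have h2 := congrArg (Equiv.swap 0 p) h
    rw [Equiv.swap_apply_self, Equiv.swap_apply_right] at h2
    exact Fin.succ_ne_zero k h2
  · intro hx
    have h0 : Equiv.swap 0 p x ≠ 0 := by
      intro h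
      apply hx
      have := congrArg (Equiv.swap 0 p) h
      rwa [Equiv.swap_apply_self, Equiv.swap_apply_left] at this
    obtain ⟨k, hk⟩ := Fin.exists_succ_eq.mpr h0
    exact ⟨k, by rw [hk, Equiv.swap_apply_self]⟩

lemma prodS_singleton (s : List Y → K) : prodS [s] = s := by
  have : prodS [s] = mulS s oneS := rfl
  rw [this, mulS_oneS]

lemma H2 : ∀ (n : ℕ) (Ss : Fin n → List Y → K) (Ps : Fin n → List Y →₀ K),
    (∀ i, Ps i ([] : List Y) = 0) →
    GG (List.ofFn Ps) (List.ofFn Ss)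
      = ∑ σ : Equiv.Perm (Fin n), ∏ i, pairPS (Ss (σ i)) (Ps i) := by
  intro n
  induction n with
  | zero =>
    intro Ss Ps hP
    simp only [List.ofFn_zero]
    rw [show GG ([] : List (List Y →₀ K)) ([] : List (List Y → K))
      = prodS ([] : List (List Y → K)) [] from rfl]
    simp [oneS, prodS]
  | succ n ih =>
    intro Ss Ps hP
    rw [show List.ofFn Ps = Ps 0 :: List.ofFn (fun i => Ps i.succ) from List.ofFn_succ]
    rw [GG]
    have hvan : ∀ p ∈ allSplits (List.ofFn Ss), p.1.length ≠ 1 →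
        pairPS (prodS p.1) (Ps 0) * GG (List.ofFn fun i => Ps i.succ) p.2 = 0 := by
      intro p hp hlen1
      rcases Nat.lt_or_ge p.1.length 1 with hlt | hge
      · have h1 : p.1 = [] := List.length_eq_zero_iff.mp (by omega)
        rw [h1, pairPS_prodS_nil, hP 0, zero_mul]
      · have h2 : 2 ≤ p.1.length := by omega
        have hlen := allSplits_length (List.ofFn Ss) p hp
        rw [List.length_ofFn] at hlen
        have h3 : p.2.length < (List.ofFn fun i : Fin n => Ps i.succ).length := by
          rw [List.length_ofFn]
          omega
        rw [H1 _ p.2 (fun Q hQ => by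
          rw [List.mem_ofFn] at hQ
          obtain ⟨i, rfl⟩ := hQ
          exact hP i.succ) h3, mul_zero]
    rw [EL (List.ofFn Ss) _ hvan]
    have hlen : (List.ofFn Ss).length = n + 1 := List.length_ofFn
    rw [hlen]
    rw [← Fin.sum_univ_eq_sum_range (fun j =>
      pairPS (prodS (((List.ofFn Ss).drop j).take 1)) (Ps 0)
        * GG (List.ofFn fun i => Ps i.succ) ((List.ofFn Ss).eraseIdx j)) (n + 1)]
    have hterm : ∀ i : Fin (n + 1),
        pairPS (prodS (((List.ofFn Ss).drop i.val).take 1)) (Ps 0)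
          * GG (List.ofFn fun k => Ps k.succ) ((List.ofFn Ss).eraseIdx i.val)
        = pairPS (Ss i) (Ps 0) * ∑ e : Equiv.Perm (Fin n),
            ∏ k, pairPS (Ss (i.succAbove (e k))) (Ps k.succ) := by
      intro i
      have hd : ((List.ofFn Ss).drop i.val).take 1 = [Ss i] := by
        rw [List.drop_eq_getElem_cons (by simpa using i.isLt)]
        rw [List.getElem_ofFn]
        simp
      rw [hd, prodS_singleton, eraseIdx_ofFn Ss i,
        ih (fun j => Ss (i.succAbove j)) (fun k => Ps k.succ) (fun k => hP k.succ)]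
    rw [Finset.sum_congr rfl fun i _ => hterm i]
    -- now the right-hand side
    rw [← Equiv.sum_comp (Equiv.Perm.decomposeFin.symm)
      (fun σ : Equiv.Perm (Fin (n + 1)) => ∏ i, pairPS (Ss (σ i)) (Ps i))]
    rw [Fintype.sum_prod_type]
    refine Finset.sum_congr rfl fun p _ => ?_
    have hprod : ∀ e : Equiv.Perm (Fin n),
        (∏ i, pairPS (Ss ((Equiv.Perm.decomposeFin.symm (p, e)) i)) (Ps i))
          = pairPS (Ss p) (Ps 0)
            * ∏ k, pairPS (Ss (Equiv.swap 0 p (e k).succ)) (Ps k.succ) := by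
      intro e
      rw [Fin.prod_univ_succ]
      rw [Equiv.Perm.decomposeFin_symm_apply_zero]
      refine congrArg _ (Finset.prod_congr rfl fun k _ => ?_)
      rw [Equiv.Perm.decomposeFin_symm_apply_succ]
    rw [Finset.sum_congr rfl fun e _ => hprod e, ← Finset.mul_sum]
    congr 1
    have hinj1 : Function.Injective (fun k : Fin n => Equiv.swap 0 p k.succ) :=
      fun x y h => Fin.succ_injective n ((Equiv.swap 0 p).injective h)
    have hinj2 : Function.Injective p.succAbove := Fin.succAbove_right_injective
    have hr : Set.range (fun k : Fin n => Equiv.swap 0 p k.succ)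
        = Set.range p.succAbove := by
      rw [range_swapSucc, Fin.range_succAbove]
    exact (sumPermComp (fun k : Fin n => Equiv.swap 0 p k.succ) p.succAbove hinj1 hinj2 hr
      (fun k x => pairPS (Ss x) (Ps k.succ))).symm

end AuxBasic

/-- pairing of products, permanent formula: for primitive series
`S_1,…,S_n` and proper polynomials `P_1,…,P_n`,
`⟨P_1 ⧢_φ ⋯ ⧢_φ P_n, S_1 ⋯ S_n⟩ = Σ_{σ ∈ 𝔖_n} Π_i ⟨P_i, S_{σ(i)}⟩`. -/
theorem pairing_products_permanent (φ : Y → Y → (Y →₀ K))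
    (m : (List Y →₀ K) →ₗ[K] (List Y →₀ K) →ₗ[K] (List Y →₀ K))
    (hm : IsPhiShuffle φ m) (hassoc : PhiAssoc φ) (hcomm : PhiComm φ)
    (hdual : PhiDualizable φ) (n : ℕ)
    (Ps : Fin n → (List Y →₀ K)) (Ss : Fin n → (List Y → K))
    (hP : ∀ i, Ps i ([] : List Y) = 0) (hS : ∀ i, PrimS m (Ss i)) :
    pairPS (prodS (List.ofFn Ss)) (prodM m (List.ofFn Ps)) =
      ∑ σ : Equiv.Perm (Fin n), ∏ i, pairPS (Ss (σ i)) (Ps i) := by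
  have hprim : ∀ S ∈ List.ofFn Ss, PrimS m S := by
    intro S hs
    rw [List.mem_ofFn] at hs
    obtain ⟨i, rfl⟩ := hs
    exact hS i
  rw [claimF m hm (List.ofFn Ps) (List.ofFn Ss) hprim, H2 n Ss Ps hP]

end
end

section
/- Let π_1 be the endomorphism of series defined by π_1(S) = Σ_{k≥1} ((-1)^{k-1}/k) Σ_{u_1,...,u_k ∈ Y^+} ⟨S, u_1 ⧢_φ ⋯ ⧢_φ u_k⟩ u_1⋯u_k. Then π_1 is a projector (π_1 ∘ π_1 = π_1) whose image is exactly the space of primitive series Prim(K⟨⟨Y⟩⟩). -/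
noncomputable section

open Finsupp

variable {K : Type*} [CommRing K] [Algebra ℚ K]
variable {Y : Type*} [DecidableEq Y]

namespace PiOne
set_option linter.unusedSectionVars false

variable {φ : Y → Y → (Y →₀ K)}
variable {m : (List Y →₀ K) →ₗ[K] (List Y →₀ K) →ₗ[K] (List Y →₀ K)}

lemma single_eq_smul_word (w : List Y) (k : K) :
    (Finsupp.single w k : List Y →₀ K) = k • word w := by
  simp [word, Finsupp.smul_single]

lemma consL_word (a : Y) (w : List Y) : consL a (word w : List Y →₀ K) = word (a :: w) := by
  simp [consL, word, Finsupp.mapDomain_single]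

lemma consL_apply_nil (a : Y) (p : List Y →₀ K) : (consL a p) [] = 0 := by
  have : ([] : List Y) ∉ Set.range (List.cons a) := by
    rintro ⟨x, hx⟩; cases hx
  simpa [consL] using Finsupp.mapDomain_notin_range p _ this

/-- `phL W ψ = Σ_d ψ_d • (d · W)`, as a linear map in `ψ`. -/
def phL (W : List Y →₀ K) : (Y →₀ K) →ₗ[K] (List Y →₀ K) :=
  Finsupp.lsum K fun d => LinearMap.toSpanSingleton K _ (consL d W)

lemma phL_apply (W : List Y →₀ K) (ψ : Y →₀ K) :
    phL W ψ = ψ.sum fun d k => k • consL d W := by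
  simp only [phL, Finsupp.lsum_apply]
  exact Finsupp.sum_congr fun d _ => by simp [LinearMap.toSpanSingleton_apply]

lemma phL_zeroW (ψ : Y →₀ K) : phL (0 : List Y →₀ K) ψ = 0 := by
  simp [phL_apply]

lemma phL_addW (W W' : List Y →₀ K) (ψ : Y →₀ K) :
    phL (W + W') ψ = phL W ψ + phL W' ψ := by
  simp only [phL_apply, Finsupp.sum, map_add, smul_add]
  exact Finset.sum_add_distrib

lemma phL_smulW (c : K) (W : List Y →₀ K) (ψ : Y →₀ K) :
    phL (c • W) ψ = c • phL W ψ := by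
  simp only [phL_apply, Finsupp.sum, map_smul, Finset.smul_sum]
  exact Finset.sum_congr rfl fun d _ => smul_comm _ _ _

lemma hm_rec (hm : IsPhiShuffle φ m) (a b : Y) (u v : List Y) :
    m (word (a :: u)) (word (b :: v)) =
      consL a (m (word u) (word (b :: v))) + consL b (m (word (a :: u)) (word v)) +
      phL (m (word u) (word v)) (φ a b) := by
  rw [hm.2.2 a b u v, phL_apply]

lemma m_one_left (hm : IsPhiShuffle φ m) (p : List Y →₀ K) : m (word []) p = p := by
  induction p using Finsupp.induction_linear with
  | zero => simp
  | add f g hf hg => rw [map_add, hf, hg]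
  | single w k => rw [single_eq_smul_word, map_smul, hm.1]

lemma m_one_right (hm : IsPhiShuffle φ m) (p : List Y →₀ K) : m p (word []) = p := by
  induction p using Finsupp.induction_linear with
  | zero => simp
  | add f g hf hg => rw [map_add, LinearMap.add_apply, hf, hg]
  | single w k =>
      rw [single_eq_smul_word, map_smul, LinearMap.smul_apply, hm.2.1]

/-- Recursion with a general polynomial in the second slot. -/
lemma m_rec_right (hm : IsPhiShuffle φ m) (a b : Y) (u : List Y) (p : List Y →₀ K) :
    m (word (a :: u)) (consL b p) =
      consL a (m (word u) (consL b p)) + consL b (m (word (a :: u)) p) +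
      phL (m (word u) p) (φ a b) := by
  induction p using Finsupp.induction_linear with
  | zero => simp [phL_zeroW]
  | add f g hf hg =>
      simp only [map_add]
      rw [phL_addW, hf, hg]; abel
  | single w k =>
      rw [single_eq_smul_word]
      simp only [map_smul, LinearMap.smul_apply, phL_smulW]
      rw [consL_word, hm_rec hm a b u w, smul_add, smul_add]

/-- Recursion with a general polynomial in the first slot. -/
lemma m_rec_left (hm : IsPhiShuffle φ m) (a b : Y) (p : List Y →₀ K) (v : List Y) :
    m (consL a p) (word (b :: v)) =
      consL a (m p (word (b :: v))) + consL b (m (consL a p) (word v)) +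
      phL (m p (word v)) (φ a b) := by
  induction p using Finsupp.induction_linear with
  | zero => simp [phL_zeroW]
  | add f g hf hg =>
      simp only [map_add, LinearMap.add_apply]
      rw [phL_addW, hf, hg]; abel
  | single w k =>
      rw [single_eq_smul_word]
      simp only [map_smul, LinearMap.smul_apply, phL_smulW]
      rw [consL_word, hm_rec hm a b w v, smul_add, smul_add]

lemma mphL_left (ψ : Y →₀ K) (Z q : List Y →₀ K) :
    m (phL Z ψ) q = ψ.sum fun d k => k • m (consL d Z) q := by
  have h := map_finsuppSum (m.flip q) ψ (fun d k => k • consL d Z)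
  simp only [LinearMap.flip_apply] at h
  rw [phL_apply, h]
  exact Finsupp.sum_congr fun d _ => by simp

lemma mphL_right (q : List Y →₀ K) (ψ : Y →₀ K) (Z : List Y →₀ K) :
    m q (phL Z ψ) = ψ.sum fun d k => k • m q (consL d Z) := by
  have h := map_finsuppSum (m q) ψ (fun d k => k • consL d Z)
  rw [phL_apply, h]
  exact Finsupp.sum_congr fun d _ => by simp

lemma phiExt_single_right (φ : Y → Y → (Y →₀ K)) (ψ : Y →₀ K) (c : Y) :
    phiExt φ ψ (Finsupp.single c 1) = ψ.sum fun d k => k • φ d c := by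
  unfold phiExt
  refine Finsupp.sum_congr fun d _ => ?_
  rw [Finsupp.sum_single_index (by simp), mul_one]

lemma phiExt_single_left (φ : Y → Y → (Y →₀ K)) (a : Y) (ψ : Y →₀ K) :
    phiExt φ (Finsupp.single a 1) ψ = ψ.sum fun e k => k • φ a e := by
  unfold phiExt
  rw [Finsupp.sum_single_index (by simp)]
  refine Finsupp.sum_congr fun e _ => ?_
  rw [one_mul]

lemma phL_phiAssoc (hassoc : PhiAssoc φ) (W : List Y →₀ K) (a b c : Y) :
    ((φ a b).sum fun d k => k • phL W (φ d c)) =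
    ((φ b c).sum fun e k => k • phL W (φ a e)) := by
  have h := congrArg (phL W) (hassoc a b c)
  rw [phiExt_single_right, phiExt_single_left] at h
  rw [map_finsuppSum, map_finsuppSum] at h
  simpa [map_smul] using h

lemma m_comm_words (hm : IsPhiShuffle φ m) (hcomm : PhiComm φ) :
    ∀ n u v, u.length + v.length ≤ n → m (word u) (word v) = m (word v) (word u) := by
  intro n
  induction n with
  | zero =>
      intro u v h
      have hu : u = [] := by cases u <;> simp_all
      have hv : v = [] := by cases v <;> simp_all
      subst hu; subst hv; rfl
  | succ n ih =>
      intro u v h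
      match u, v with
      | [], v => rw [hm.1, hm.2.1]
      | a :: u', [] => rw [hm.1, hm.2.1]
      | a :: u', b :: v' =>
          simp only [List.length_cons] at h
          rw [hm_rec hm a b u' v', hm_rec hm b a v' u']
          rw [ih u' (b :: v') (by simp only [List.length_cons]; omega),
            ih (a :: u') v' (by simp only [List.length_cons]; omega),
            ih u' v' (by omega), hcomm a b]
          abel

lemma m_comm (hm : IsPhiShuffle φ m) (hcomm : PhiComm φ) (p q : List Y →₀ K) :
    m p q = m q p := by
  induction p using Finsupp.induction_linear with
  | zero => simp
  | add f g hf hg => simp only [map_add, LinearMap.add_apply, hf, hg]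
  | single w k =>
      induction q using Finsupp.induction_linear with
      | zero => simp
      | add f g hf hg => simp only [map_add, LinearMap.add_apply, hf, hg]
      | single w' k' =>
          rw [single_eq_smul_word, single_eq_smul_word]
          simp only [map_smul, LinearMap.smul_apply]
          rw [m_comm_words hm hcomm (w.length + w'.length) w w' le_rfl, smul_comm]

lemma PR_left (hm : IsPhiShuffle φ m) (ψ : Y →₀ K) (Z : List Y →₀ K) (c : Y) (w : List Y) :
    m (phL Z ψ) (word (c :: w)) =
      phL (m Z (word (c :: w))) ψ + consL c (m (phL Z ψ) (word w)) +
      ψ.sum fun d k => k • phL (m Z (word w)) (φ d c) := by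
  have h1 : (ψ.sum fun d k => k • m (consL d Z) (word (c :: w)))
      = ψ.sum fun d k => (k • consL d (m Z (word (c :: w)))
          + k • consL c (m (consL d Z) (word w)) + k • phL (m Z (word w)) (φ d c)) :=
    Finsupp.sum_congr fun d _ => by rw [m_rec_left hm, smul_add, smul_add]
  have h2 : (ψ.sum fun d k => k • consL c (m (consL d Z) (word w)))
      = consL c (m (phL Z ψ) (word w)) := by
    rw [mphL_left, map_finsuppSum]
    exact Finsupp.sum_congr fun d _ => (map_smul (consL c) _ _).symm
  conv_lhs => rw [mphL_left]
  rw [h1, Finsupp.sum_add, Finsupp.sum_add, h2, ← phL_apply]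

lemma PR_right (hm : IsPhiShuffle φ m) (a : Y) (u : List Y) (Z : List Y →₀ K) (ψ : Y →₀ K) :
    m (word (a :: u)) (phL Z ψ) =
      consL a (m (word u) (phL Z ψ)) + phL (m (word (a :: u)) Z) ψ +
      ψ.sum fun d k => k • phL (m (word u) Z) (φ a d) := by
  have h1 : (ψ.sum fun d k => k • m (word (a :: u)) (consL d Z))
      = ψ.sum fun d k => (k • consL a (m (word u) (consL d Z))
          + k • consL d (m (word (a :: u)) Z) + k • phL (m (word u) Z) (φ a d)) :=
    Finsupp.sum_congr fun d _ => by rw [m_rec_right hm, smul_add, smul_add]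
  have h2 : (ψ.sum fun d k => k • consL a (m (word u) (consL d Z)))
      = consL a (m (word u) (phL Z ψ)) := by
    rw [mphL_right, map_finsuppSum]
    exact Finsupp.sum_congr fun d _ => (map_smul (consL a) _ _).symm
  conv_lhs => rw [mphL_right]
  rw [h1, Finsupp.sum_add, Finsupp.sum_add, h2, ← phL_apply]

set_option maxHeartbeats 1000000 in
lemma m_assoc_words (hm : IsPhiShuffle φ m) (hassoc : PhiAssoc φ) :
    ∀ n u v w, u.length + v.length + w.length ≤ n →
      m (m (word u) (word v)) (word w) = m (word u) (m (word v) (word w)) := by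
  intro n
  induction n with
  | zero =>
      intro u v w h
      have hu : u = [] := by cases u <;> simp_all
      subst hu
      rw [hm.1, m_one_left hm]
  | succ n ih =>
      intro u v w h
      match u, v, w with
      | [], v, w => rw [hm.1, m_one_left hm]
      | a :: u', [], w => rw [hm.2.1, m_one_left hm]
      | a :: u', b :: v', [] => rw [m_one_right hm, m_one_right hm]
      | a :: u', b :: v', c :: w' =>
          simp only [List.length_cons] at h
          have ih1 : m (m (word u') (word (b :: v'))) (word (c :: w'))
              = m (word u') (m (word (b :: v')) (word (c :: w'))) :=
            ih _ _ _ (by simp only [List.length_cons]; omega)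
          have ih2 : m (m (word (a :: u')) (word v')) (word (c :: w'))
              = m (word (a :: u')) (m (word v') (word (c :: w'))) :=
            ih _ _ _ (by simp only [List.length_cons]; omega)
          have ih3 : m (m (word (a :: u')) (word (b :: v'))) (word w')
              = m (word (a :: u')) (m (word (b :: v')) (word w')) :=
            ih _ _ _ (by simp only [List.length_cons]; omega)
          have ih4 : m (m (word u') (word v')) (word (c :: w'))
              = m (word u') (m (word v') (word (c :: w'))) :=
            ih _ _ _ (by simp only [List.length_cons]; omega)
          have ih5 : m (m (word u') (word (b :: v'))) (word w')
              = m (word u') (m (word (b :: v')) (word w')) :=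
            ih _ _ _ (by simp only [List.length_cons]; omega)
          have ih6 : m (m (word (a :: u')) (word v')) (word w')
              = m (word (a :: u')) (m (word v') (word w')) :=
            ih _ _ _ (by simp only [List.length_cons]; omega)
          have ih7 : m (m (word u') (word v')) (word w')
              = m (word u') (m (word v') (word w')) :=
            ih _ _ _ (by omega)
          rw [hm_rec hm a b u' v']
          rw [hm_rec hm b c v' w']
          simp only [map_add, LinearMap.add_apply]
          rw [m_rec_left hm a c, m_rec_left hm b c, PR_left hm,
            m_rec_right hm a b, m_rec_right hm a c, PR_right hm]
          rw [ih1, ih2, ih4, ih5, ih6, ih7]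
          rw [hm_rec hm b c v' w']
          simp only [map_add]
          rw [← ih3, hm_rec hm a b u' v']
          simp only [map_add, LinearMap.add_apply]
          rw [phL_phiAssoc hassoc (m (word u') (m (word v') (word w'))) a b c]
          abel

lemma m_assoc (hm : IsPhiShuffle φ m) (hassoc : PhiAssoc φ) (p q r : List Y →₀ K) :
    m (m p q) r = m p (m q r) := by
  induction p using Finsupp.induction_linear with
  | zero => simp
  | add f g hf hg => simp only [map_add, LinearMap.add_apply, hf, hg]
  | single w k =>
    induction q using Finsupp.induction_linear with
    | zero => simp
    | add f g hf hg => simp only [map_add, LinearMap.add_apply, hf, hg]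
    | single w' k' =>
      induction r using Finsupp.induction_linear with
      | zero => simp
      | add f g hf hg => simp only [map_add, LinearMap.add_apply, hf, hg]
      | single w'' k'' =>
          simp only [single_eq_smul_word, map_smul, LinearMap.smul_apply]
          rw [m_assoc_words hm hassoc (w.length + w'.length + w''.length) w w' w'' le_rfl]
section ListHelpers
variable {α : Type*} {β : Type*} {M : Type*} [AddCommMonoid M]

lemma filter_flatMap' (L : List α) (g : α → List β) (p : β → Bool) :
    (L.flatMap g).filter p = L.flatMap fun x => (g x).filter p := by
  induction L with
  | nil => simp
  | cons x l ih => simp [List.filter_append, ih]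

lemma sum_map_flatMap (L : List α) (g : α → List β) (f : β → M) :
    ((L.flatMap g).map f).sum = (L.map fun x => ((g x).map f).sum).sum := by
  induction L with
  | nil => simp
  | cons x l ih => simp [ih]

lemma sum_map_ite (l : List α) (q : α → Prop) [DecidablePred q] (f : α → M) :
    (l.map fun x => if q x then f x else 0).sum = ((l.filter fun x => q x).map f).sum := by
  induction l with
  | nil => simp
  | cons x l ih =>
      by_cases h : q x <;> simp [List.filter_cons, h, ih]

lemma sum_map_add (l : List α) (f g : α → M) :
    (l.map fun x => f x + g x).sum = (l.map f).sum + (l.map g).sum := by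
  induction l with
  | nil => simp
  | cons x l ih => simp only [List.map_cons, List.sum_cons, ih]; abel

lemma sum_map_bucket (l : List α) (f : α → M) (key : α → ℕ) (N : ℕ)
    (h : ∀ x ∈ l, key x < N) :
    (l.map f).sum = ∑ k ∈ Finset.range N, ((l.filter fun x => key x = k).map f).sum := by
  induction l with
  | nil => simp
  | cons x l ih =>
      have hx : key x < N := h x (by simp)
      have hrest : ∀ y ∈ l, key y < N := fun y hy => h y (by simp [hy])
      have hsplit : ∀ k, (((x :: l).filter fun y => key y = k).map f).sum
          = (if key x = k then f x else 0) + ((l.filter fun y => key y = k).map f).sum := by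
        intro k
        by_cases hk : key x = k <;> simp [List.filter_cons, hk]
      rw [List.map_cons, List.sum_cons, ih hrest, Finset.sum_congr rfl fun k _ => hsplit k,
        Finset.sum_add_distrib]
      congr 1
      simp [Finset.sum_ite_eq, hx]
end ListHelpers

def cutStep (a : Y) : List (List Y) → List (List (List Y))
  | [] => [[[a]]]
  | p :: ps => [[a] :: p :: ps, (a :: p) :: ps]

lemma cuts_cons (a : Y) (w : List Y) : cuts (a :: w) = (cuts w).flatMap (cutStep a) := by
  show (cuts w).flatMap _ = _
  congr 1

lemma mem_cuts_len : ∀ (w : List Y) (P : List (List Y)), P ∈ cuts w → P.length ≤ w.length := by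
  intro w
  induction w with
  | nil => intro P hP; simp [cuts] at hP; simp [hP]
  | cons a w ih =>
      intro P hP
      rw [cuts_cons] at hP
      simp only [List.mem_flatMap] at hP
      obtain ⟨Q, hQ, hP⟩ := hP
      have hlen := ih _ hQ
      cases Q with
      | nil =>
          simp [cutStep] at hP
          subst hP; simp
      | cons p ps =>
          simp only [cutStep, List.mem_cons, List.mem_singleton, List.not_mem_nil,
            or_false] at hP
          rcases hP with h | h <;> subst h <;>
            simp only [List.length_cons] at hlen ⊢ <;> omega

lemma cuts_pos : ∀ (a : Y) (w : List Y) (P : List (List Y)), P ∈ cuts (a :: w) → 0 < P.length := by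
  intro a w P hP
  rw [cuts_cons] at hP
  simp only [List.mem_flatMap] at hP
  obtain ⟨Q, hQ, hP⟩ := hP
  cases Q with
  | nil => simp [cutStep] at hP; subst hP; simp
  | cons p ps =>
      simp only [cutStep, List.mem_cons, List.mem_singleton, List.not_mem_nil,
        or_false] at hP
      rcases hP with h | h <;> subst h <;> simp

/-- The degree-`k` piece of the Eulerian expansion of a word. -/
def Dk (m : (List Y →₀ K) →ₗ[K] (List Y →₀ K) →ₗ[K] (List Y →₀ K)) (k : ℕ) (w : List Y) :
    List Y →₀ K :=
  (((cuts w).filter fun P => P.length = k).map fun P => prodM m (P.map word)).sum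

lemma Dk_zero' (w : List Y) : Dk m 0 w = if w = [] then word [] else 0 := by
  cases w with
  | nil => simp [Dk, cuts, prodM]
  | cons a w =>
      simp only [if_neg (List.cons_ne_nil a w)]
      unfold Dk
      have h : (cuts (a :: w)).filter (fun P => P.length = 0) = [] := by
        rw [List.filter_eq_nil_iff]
        intro P hP
        have := cuts_pos a w P hP
        simp only [decide_eq_true_eq]
        omega
      rw [h]; simp

lemma cutrec (k : ℕ) : ∀ (w : List Y) (g : List Y → List Y →₀ K),
    (((cuts w).filter fun P => P.length = k + 1).map
        fun P => m (g P.headI) (prodM m (P.tail.map word))).sum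
      = ∑ s ∈ Finset.range w.length, m (g (w.take (s + 1))) (Dk m k (w.drop (s + 1))) := by
  intro w
  induction w with
  | nil => intro g; simp [cuts]
  | cons a w ih =>
      intro g
      rw [cuts_cons, filter_flatMap', sum_map_flatMap]
      have key : ∀ Q ∈ cuts w,
          ((((cutStep a Q).filter fun P => P.length = k + 1).map
              fun P => m (g P.headI) (prodM m (P.tail.map word))).sum : List Y →₀ K)
          = (if Q.length = k then m (g [a]) (prodM m (Q.map word)) else 0)
            + (if Q.length = k + 1 then m (g (a :: Q.headI)) (prodM m (Q.tail.map word))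
               else 0) := by
        intro Q _
        cases Q with
        | nil =>
            by_cases hk : 0 = k
            · subst hk
              simp [cutStep, List.filter_cons, prodM]
            · have h1 : ¬((1:ℕ) = k + 1) := by omega
              simp [cutStep, List.filter_cons, prodM, hk, h1, Ne.symm hk]
        | cons p ps =>
            by_cases h1 : ps.length + 1 = k <;> by_cases h2 : ps.length + 1 = k + 1
            · omega
            · simp [cutStep, List.filter_cons, List.length_cons, h1, h2, add_left_inj]
            · simp [cutStep, List.filter_cons, List.length_cons, h1, h2, add_left_inj]
            · simp [cutStep, List.filter_cons, List.length_cons, h1, h2, add_left_inj,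
                show ps.length ≠ k by omega]
      rw [List.map_congr_left key, sum_map_add, sum_map_ite, sum_map_ite]
      rw [ih fun l => g (a :: l)]
      have hfirst :
          (((cuts w).filter fun Q => Q.length = k).map
            fun Q => m (g [a]) (prodM m (Q.map word))).sum
          = m (g [a]) (Dk m k w) := by
        unfold Dk
        rw [map_list_sum (m (g [a])), List.map_map]
        rfl
      rw [hfirst]
      simp only [List.length_cons]
      rw [Finset.sum_range_succ']
      simp only [zero_add, List.take_succ_cons, List.drop_succ_cons, List.take_zero,
        List.drop_zero]
      abel

lemma Dk_succ (k : ℕ) (w : List Y) :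
    Dk m (k + 1) w
      = ∑ s ∈ Finset.range w.length, m (word (w.take (s + 1))) (Dk m k (w.drop (s + 1))) := by
  rw [← cutrec k w word]
  unfold Dk
  congr 1
  refine List.map_congr_left fun P hP => ?_
  have hlen : P.length = k + 1 := by
    have := List.of_mem_filter hP
    simpa using this
  match P with
  | [] => simp at hlen
  | p :: ps => simp [prodM]

lemma Dk_bound : ∀ (k : ℕ) (w : List Y), w.length < k → Dk m k w = 0 := by
  intro k
  induction k with
  | zero => intro w h; omega
  | succ k ih =>
      intro w h
      rw [Dk_succ]
      refine Finset.sum_eq_zero fun s hs => ?_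
      have hs' := Finset.mem_range.mp hs
      rw [ih (w.drop (s + 1)) (by simp only [List.length_drop]; omega), map_zero]
section Generic
variable {M : Type*} [AddCommMonoid M] [Module K M]

lemma FphL (F : (List Y →₀ K) →ₗ[K] M) (Z : List Y →₀ K) (ψ : Y →₀ K) :
    F (phL Z ψ) = ψ.sum fun d k => k • F (consL d Z) := by
  rw [phL_apply, map_finsuppSum F ψ (fun d k => k • consL d Z)]
  exact Finsupp.sum_congr fun d _ => by rw [map_smul]

lemma finsupp_swap2 (ψ : Y →₀ K) (s t : Finset ℕ) (T : Y → K → ℕ → ℕ → M) :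
    (ψ.sum fun d k => k • ∑ i ∈ s, ∑ j ∈ t, T d k i j)
      = ∑ i ∈ s, ∑ j ∈ t, ψ.sum fun d k => k • T d k i j := by
  simp only [Finsupp.sum, Finset.smul_sum]
  rw [Finset.sum_comm]
  exact Finset.sum_congr rfl fun i _ => Finset.sum_comm
end Generic

lemma BphL_left (B : (List Y →₀ K) →ₗ[K] (List Y →₀ K) →ₗ[K] (List Y →₀ K))
    (ψ : Y →₀ K) (Z q : List Y →₀ K) :
    B (phL Z ψ) q = ψ.sum fun d k => k • B (consL d Z) q := by
  have h := FphL (B.flip q) Z ψ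
  simp only [LinearMap.flip_apply] at h
  exact h

lemma BphL_right (B : (List Y →₀ K) →ₗ[K] (List Y →₀ K) →ₗ[K] (List Y →₀ K))
    (q : List Y →₀ K) (ψ : Y →₀ K) (Z : List Y →₀ K) :
    B q (phL Z ψ) = ψ.sum fun d k => k • B q (consL d Z) := FphL (B q) Z ψ

/-- Deconcatenation against a bilinear form, as a linear map. -/
def splitL (Bb : (List Y →₀ K) →ₗ[K] (List Y →₀ K) →ₗ[K] (List Y →₀ K)) :
    (List Y →₀ K) →ₗ[K] (List Y →₀ K) :=
  Finsupp.lsum K fun w => LinearMap.toSpanSingleton K _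
    (∑ t ∈ Finset.range (w.length + 1), Bb (word (w.take t)) (word (w.drop t)))

lemma splitL_word (Bb : (List Y →₀ K) →ₗ[K] (List Y →₀ K) →ₗ[K] (List Y →₀ K)) (w : List Y) :
    splitL Bb (word w)
      = ∑ t ∈ Finset.range (w.length + 1), Bb (word (w.take t)) (word (w.drop t)) := by
  simp [splitL, word, Finsupp.lsum_single, LinearMap.toSpanSingleton_apply]

lemma splitL_consL (Bb : (List Y →₀ K) →ₗ[K] (List Y →₀ K) →ₗ[K] (List Y →₀ K)) (a : Y)
    (q : List Y →₀ K) :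
    splitL Bb (consL a q)
      = Bb (word []) (consL a q) + splitL (Bb.comp (consL a)) q := by
  induction q using Finsupp.induction_linear with
  | zero => simp
  | add f g hf hg => simp only [map_add, hf, hg]; abel
  | single w k =>
      rw [single_eq_smul_word]
      simp only [map_smul, consL_word, ← smul_add]
      congr 1
      rw [splitL_word, splitL_word, Finset.sum_range_succ']
      simp only [List.length_cons, List.take_succ_cons, List.drop_succ_cons, List.take_zero,
        List.drop_zero, LinearMap.comp_apply, consL_word]
      abel

lemma splitL_phL (Bb : (List Y →₀ K) →ₗ[K] (List Y →₀ K) →ₗ[K] (List Y →₀ K))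
    (Z : List Y →₀ K) (ψ : Y →₀ K) :
    splitL Bb (phL Z ψ) = ψ.sum fun d k => k • splitL Bb (consL d Z) := FphL (splitL Bb) Z ψ

set_option maxHeartbeats 4000000 in
lemma bialg (hm : IsPhiShuffle φ m) :
    ∀ (n : ℕ) (u v : List Y) (Bb : (List Y →₀ K) →ₗ[K] (List Y →₀ K) →ₗ[K] (List Y →₀ K)),
      u.length + v.length ≤ n →
      splitL Bb (m (word u) (word v))
        = ∑ s ∈ Finset.range (u.length + 1), ∑ t ∈ Finset.range (v.length + 1),
            Bb (m (word (u.take s)) (word (v.take t)))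
              (m (word (u.drop s)) (word (v.drop t))) := by
  intro n
  induction n with
  | zero =>
      intro u v Bb h
      have hu : u = [] := by cases u <;> simp_all
      have hv : v = [] := by cases v <;> simp_all
      subst hu; subst hv
      rw [m_one_left hm, splitL_word]
      simp [m_one_left hm]
  | succ n ih =>
      intro u v Bb h
      match u, v with
      | [], v =>
          rw [m_one_left hm, splitL_word]
          simp [m_one_left hm]
      | a :: u', [] =>
          rw [m_one_right hm, splitL_word]
          simp [m_one_right hm]
      | a :: u', b :: v' =>
          simp only [List.length_cons] at h
          have e1 := ih u' (b :: v') (Bb.comp (consL a))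
            (by simp only [List.length_cons]; omega)
          have e2 := ih (a :: u') v' (Bb.comp (consL b))
            (by simp only [List.length_cons]; omega)
          have e3 : ∀ d : Y, splitL (Bb.comp (consL d)) (m (word u') (word v'))
              = ∑ s ∈ Finset.range (u'.length + 1), ∑ t ∈ Finset.range (v'.length + 1),
                  Bb (consL d (m (word (u'.take s)) (word (v'.take t))))
                    (m (word (u'.drop s)) (word (v'.drop t))) := by
            intro d
            rw [ih u' v' (Bb.comp (consL d)) (by omega)]
            simp only [LinearMap.comp_apply]
          simp only [hm_rec hm, map_add, LinearMap.add_apply, splitL_consL, splitL_phL,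
            BphL_left, BphL_right, smul_add, Finsupp.sum_add, List.length_cons,
            Finset.sum_range_succ', List.take_succ_cons, List.drop_succ_cons,
            List.take_zero, List.drop_zero, zero_add, m_one_left hm, m_one_right hm,
            consL_word, LinearMap.comp_apply, Finset.sum_add_distrib]
          have e3sum : ((φ a b).sum fun d k =>
                k • splitL (Bb.comp (consL d)) (m (word u') (word v')))
              = (φ a b).sum fun d k =>
                k • ∑ s ∈ Finset.range (u'.length + 1), ∑ t ∈ Finset.range (v'.length + 1),
                  Bb (consL d (m (word (u'.take s)) (word (v'.take t))))
                    (m (word (u'.drop s)) (word (v'.drop t))) :=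
            Finsupp.sum_congr fun d _ => by rw [e3 d]
          rw [e1, e2, e3sum, finsupp_swap2]
          simp only [List.length_cons, Finset.sum_range_succ']
          simp only [zero_add, List.take_succ_cons, List.drop_succ_cons, List.take_zero,
            List.drop_zero, m_one_left hm, m_one_right hm, consL_word,
            LinearMap.comp_apply]
          simp only [smul_add, Finsupp.sum_add, Finset.sum_add_distrib]
          abel
/-- Coefficient of `x^i y^j` in `(x + y + xy)^k`. -/
def cc : ℕ → ℕ → ℕ → ℚ
  | 0, 0, 0 => 1
  | 0, _+1, _ => 0
  | 0, 0, _+1 => 0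
  | _+1, 0, 0 => 0
  | k+1, 0, j+1 => cc k 0 j
  | k+1, i+1, 0 => cc k i 0
  | k+1, i+1, j+1 => cc k i (j+1) + cc k (i+1) j + cc k i j

lemma cc_sss (k i j : ℕ) :
    cc (k+1) (i+1) (j+1) = cc k i (j+1) + cc k (i+1) j + cc k i j := rfl
lemma cc_s00 (k : ℕ) : cc (k+1) 0 0 = 0 := rfl
lemma cc_s0s (k j : ℕ) : cc (k+1) 0 (j+1) = cc k 0 j := rfl
lemma cc_ss0 (k i : ℕ) : cc (k+1) (i+1) 0 = cc k i 0 := rfl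
lemma cc_0ss (i j : ℕ) : cc 0 (i+1) j = 0 := rfl

lemma cc00 (k : ℕ) : cc k 0 0 = if k = 0 then 1 else 0 := by
  cases k <;> simp [cc]

lemma cc_i0 : ∀ k i : ℕ, cc k i 0 = if k = i then 1 else 0 := by
  intro k
  induction k with
  | zero => intro i; cases i <;> simp [cc]
  | succ k ih =>
      intro i
      cases i with
      | zero => simp [cc]
      | succ i => rw [cc_ss0, ih i]; simp [Nat.succ_inj]

lemma cc_0j : ∀ k j : ℕ, cc k 0 j = if k = j then 1 else 0 := by
  intro k
  induction k with
  | zero => intro j; cases j <;> simp [cc]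
  | succ k ih =>
      intro j
      cases j with
      | zero => simp [cc]
      | succ j => rw [cc_s0s, ih j]; simp [Nat.succ_inj]

lemma cc_01 (j : ℕ) : cc 0 1 j = 0 := by cases j <;> rfl
lemma cc_s10 (k : ℕ) : cc (k+1) 1 0 = cc k 0 0 := rfl
lemma cc_s1s (k j : ℕ) : cc (k+1) 1 (j+1) = cc k 0 (j+1) + cc k 1 j + cc k 0 j := rfl

lemma cc_1j : ∀ k j : ℕ, cc k 1 j = if k = j ∨ k = j + 1 then (k : ℚ) else 0 := by
  intro k
  induction k with
  | zero =>
      intro j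
      rw [cc_01]
      cases j <;> simp
  | succ k ih =>
      intro j
      cases j with
      | zero =>
          rw [cc_s10, cc00]
          by_cases h : k = 0
          · subst h; norm_num
          · have h2 : ¬(k + 1 = 0 ∨ k + 1 = 0 + 1) := by omega
            rw [if_neg h, if_neg h2]
      | succ j =>
          rw [cc_s1s, ih j, cc_0j, cc_0j]
          split_ifs <;> push_cast <;> (first | ring1 | (exfalso; omega))

lemma ccz1 : ∀ k i j : ℕ, k < i → cc k i j = 0 := by
  intro k
  induction k with
  | zero =>
      intro i j h
      match i, j with
      | i+1, j => exact cc_0ss i j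
  | succ k ih =>
      intro i j h
      match i, j with
      | i+1, 0 => rw [cc_ss0, cc_i0]; simp; omega
      | i+1, j+1 =>
          rw [cc_sss, ih i (j+1) (by omega), ih (i+1) j (by omega), ih i j (by omega)]
          ring

lemma cc_symm : ∀ k i j : ℕ, cc k i j = cc k j i := by
  intro k
  induction k with
  | zero =>
      intro i j
      match i, j with
      | 0, 0 => rfl
      | 0, j+1 => simp [cc]
      | i+1, 0 => simp [cc]
      | i+1, j+1 => simp [cc]
  | succ k ih =>
      intro i j
      match i, j with
      | 0, 0 => rfl
      | 0, j+1 => rw [cc_s0s, cc_ss0, ih 0 j]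
      | i+1, 0 => rw [cc_s0s, cc_ss0, ih i 0]
      | i+1, j+1 => rw [cc_sss, cc_sss, ih i (j+1), ih (i+1) j, ih i j]; ring

lemma ccz3 : ∀ k i j : ℕ, i + j < k → cc k i j = 0 := by
  intro k
  induction k with
  | zero => intro i j h; omega
  | succ k ih =>
      intro i j h
      match i, j with
      | 0, 0 => rfl
      | 0, j+1 => rw [cc_s0s, ih 0 j (by omega)]
      | i+1, 0 => rw [cc_ss0, ih i 0 (by omega)]
      | i+1, j+1 =>
          rw [cc_sss, ih i (j+1) (by omega), ih (i+1) j (by omega), ih i j (by omega)]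
          ring

lemma ccz2 (k i j : ℕ) (h : k < j) : cc k i j = 0 := by
  rw [cc_symm]; exact ccz1 k j i h

/-- The `x`-derivative identity for the coefficients of powers of `x + y + xy`. -/
lemma ccE2 : ∀ k i j : ℕ,
    ((i : ℚ) + 1) * cc k (i+1) j = ((k : ℚ) - i) * (cc k i (j+1) + cc k i j) := by
  intro k
  induction k with
  | zero =>
      intro i j
      match i, j with
      | 0, 0 => simp [cc]
      | 0, j+1 => simp [cc]
      | i+1, 0 => simp [cc, cc_0ss] <;> ring
      | i+1, j+1 => simp [cc, cc_0ss] <;> ring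
  | succ k ih =>
      intro i j
      match i, j with
      | 0, j =>
          show (((0:ℕ):ℚ) + 1) * cc (k+1) 1 j
              = (((k+1:ℕ):ℚ) - ((0:ℕ):ℚ)) * (cc (k+1) 0 (j+1) + cc (k+1) 0 j)
          rw [cc_1j, cc_0j, cc_0j]
          split_ifs <;> push_cast <;> (first | ring1 | (exfalso; omega))
      | i+1, 0 =>
          rw [cc_i0, cc_symm, cc_1j, cc_i0]
          by_cases hB : k = i + 1
          · subst hB
            have c1 : i + 1 + 1 = i + 1 + 1 := rfl
            have c2 : ¬(i + 1 + 1 = i + 1) := by omega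
            rw [if_pos c1, if_pos (Or.inr c1), if_neg c2]
            push_cast <;> ring
          · have c1 : ¬(k + 1 = i + 1 + 1) := by omega
            by_cases hA : k = i
            · subst hA
              rw [if_neg c1, if_pos (Or.inl rfl), if_pos rfl]
              push_cast <;> ring
            · have c2 : ¬(k + 1 = i + 1 ∨ k + 1 = i + 1 + 1) := by omega
              have c3 : ¬(k + 1 = i + 1) := by omega
              rw [if_neg c1, if_neg c2, if_neg c3]
              ring
      | i+1, j+1 =>
          have IH1 := ih i (j+1)
          have IH2 := ih (i+1) j
          have IH3 := ih i j
          rw [cc_sss, cc_sss, cc_sss]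
          push_cast at IH1 IH2 IH3 ⊢
          linear_combination IH1 + IH2 + IH3

lemma ccN2 (k i j : ℕ) :
    ((i : ℚ) + 1) * cc (k+1) (i+1) (j+1) = ((k : ℚ) + 1) * (cc k i (j+1) + cc k i j) := by
  rw [cc_sss]
  have h := ccE2 k i j
  linear_combination h

lemma sum_delta (M q : ℕ) (h : q ≤ M) :
    (∑ k ∈ Finset.range (M+1), (-1:ℚ)^k * (if k = q then 1 else 0)) = (-1:ℚ)^q := by
  have hc : ∀ k ∈ Finset.range (M+1), (-1:ℚ)^k * (if k = q then 1 else 0)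
      = if k = q then (-1:ℚ)^q else 0 := by
    intro k _
    by_cases hk : k = q <;> simp [hk]
  rw [Finset.sum_congr rfl hc, Finset.sum_ite_eq' (Finset.range (M+1)) q fun _ => (-1:ℚ)^q,
    if_pos (Finset.mem_range.mpr (by omega))]

lemma alt : ∀ s p q M : ℕ, p + q = s → p + q ≤ M →
    (∑ k ∈ Finset.range (M+1), (-1:ℚ)^k * cc k p q) = (-1:ℚ)^(p+q) := by
  intro s
  induction s using Nat.strong_induction_on with
  | _ s ih =>
    intro p q M hs hM
    match p, q with
    | 0, q =>
        have hc : ∀ k ∈ Finset.range (M+1), (-1:ℚ)^k * cc k 0 q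
            = (-1:ℚ)^k * (if k = q then 1 else 0) := fun k _ => by rw [cc_0j]
        rw [Finset.sum_congr rfl hc, sum_delta M q (by omega)]
        simp
    | p+1, 0 =>
        have hc : ∀ k ∈ Finset.range (M+1), (-1:ℚ)^k * cc k (p+1) 0
            = (-1:ℚ)^k * (if k = p+1 then 1 else 0) := fun k _ => by rw [cc_i0]
        rw [Finset.sum_congr rfl hc, sum_delta M (p+1) (by omega)]
    | p+1, q+1 =>
        obtain ⟨M', rfl⟩ : ∃ M', M = M' + 1 := ⟨M - 1, by omega⟩
        rw [Finset.sum_range_succ']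
        have hstep : ∀ k ∈ Finset.range (M'+1), (-1:ℚ)^(k+1) * cc (k+1) (p+1) (q+1)
            = -((-1:ℚ)^k * cc k p (q+1)) + (-((-1:ℚ)^k * cc k (p+1) q)
              + -((-1:ℚ)^k * cc k p q)) := by
          intro k _
          rw [cc_sss]; ring
        rw [Finset.sum_congr rfl hstep, Finset.sum_add_distrib, Finset.sum_add_distrib,
          Finset.sum_neg_distrib, Finset.sum_neg_distrib, Finset.sum_neg_distrib,
          ih (p + (q+1)) (by omega) p (q+1) M' rfl (by omega),
          ih (p + 1 + q) (by omega) (p+1) q M' rfl (by omega),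
          ih (p + q) (by omega) p q M' rfl (by omega)]
        rw [cc_0ss]
        ring

lemma keyNum (i j N : ℕ) (hi : 1 ≤ i) (hj : 1 ≤ j) (hN : i + j ≤ N) :
    (∑ k ∈ Finset.range (N + 1), ((-1:ℚ)^(k-1) / (k : ℚ)) * cc k i j) = 0 := by
  obtain ⟨i', rfl⟩ : ∃ i', i = i' + 1 := ⟨i - 1, by omega⟩
  obtain ⟨j', rfl⟩ : ∃ j', j = j' + 1 := ⟨j - 1, by omega⟩
  obtain ⟨N', rfl⟩ : ∃ N', N = N' + 1 := ⟨N - 1, by omega⟩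
  have hmul : ((i':ℚ) + 1)
      * (∑ k ∈ Finset.range (N' + 1 + 1), ((-1:ℚ)^(k-1) / (k : ℚ)) * cc k (i'+1) (j'+1))
      = 0 := by
    rw [Finset.mul_sum, Finset.sum_range_succ']
    have hstep : ∀ k ∈ Finset.range (N'+1),
        ((i':ℚ) + 1) * (((-1:ℚ)^(k+1-1) / ((k+1 : ℕ) : ℚ)) * cc (k+1) (i'+1) (j'+1))
        = (-1:ℚ)^k * cc k i' (j'+1) + (-1:ℚ)^k * cc k i' j' := by
      intro k _
      have h2 := ccN2 k i' j'
      have hk : ((k:ℚ) + 1) ≠ 0 := by positivity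
      rw [Nat.add_sub_cancel]
      push_cast
      field_simp
      linear_combination h2
    rw [Finset.sum_congr rfl hstep, Finset.sum_add_distrib,
      alt (i' + (j'+1)) i' (j'+1) N' rfl (by omega),
      alt (i' + j') i' j' N' rfl (by omega)]
    rw [cc_0ss]
    push_cast
    ring
  have hne : ((i':ℚ) + 1) ≠ 0 := by positivity
  exact (mul_eq_zero.mp hmul).resolve_left hne
lemma map_qsmul {N : Type*} [AddCommMonoid N] [Module K N] [Module ℚ N]
    [IsScalarTower ℚ K N] (F : (List Y →₀ K) →ₗ[K] N) (c : ℚ) (x : List Y →₀ K) :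
    F (c • x) = c • F x := by
  rw [← IsScalarTower.algebraMap_smul K c x, map_smul, IsScalarTower.algebraMap_smul]

lemma m_qsmul_right (c : ℚ) (x y : List Y →₀ K) : m x (c • y) = c • m x y :=
  map_qsmul (m x) c y

/-- Linear extension of `Dk`. -/
def DkL (m : (List Y →₀ K) →ₗ[K] (List Y →₀ K) →ₗ[K] (List Y →₀ K)) (k : ℕ) :
    (List Y →₀ K) →ₗ[K] (List Y →₀ K) :=
  Finsupp.lsum K fun w => LinearMap.toSpanSingleton K _ (Dk m k w)

lemma DkL_word (k : ℕ) (w : List Y) : DkL m k (word w) = Dk m k w := by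
  simp [DkL, word, Finsupp.lsum_single, LinearMap.toSpanSingleton_apply]

lemma DkL_zero_apply (p : List Y →₀ K) : DkL m 0 p = p [] • word [] := by
  induction p using Finsupp.induction_linear with
  | zero => simp
  | add f g hf hg => simp [hf, hg, add_smul]
  | single w k =>
      rw [single_eq_smul_word, map_smul, DkL_word, Dk_zero']
      by_cases h : w = []
      · subst h; simp [word, Finsupp.single_apply]
      · simp [h, word, Finsupp.single_apply, Ne.symm h]

lemma m_cons_nil (hm : IsPhiShuffle φ m) (a : Y) (u : List Y) (p : List Y →₀ K) :
    (m (word (a :: u)) p) [] = 0 := by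
  induction p using Finsupp.induction_linear with
  | zero => simp
  | add f g hf hg => simp [hf, hg]
  | single w k =>
      rw [single_eq_smul_word, map_smul]
      cases w with
      | nil =>
          rw [m_one_right hm]
          simp [word, Finsupp.single_apply]
      | cons b v =>
          rw [hm_rec hm]
          simp only [Finsupp.smul_apply, Finsupp.add_apply, consL_apply_nil, phL_apply,
            Finsupp.sum_apply, Finsupp.smul_apply]
          rw [Finsupp.sum]
          simp [consL_apply_nil]

lemma splitBk_word (hm : IsPhiShuffle φ m) (k : ℕ) (w : List Y) :
    splitL (m.compl₂ (DkL m k)) (word w) = Dk m (k+1) w + Dk m k w := by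
  rw [splitL_word, Finset.sum_range_succ']
  simp only [LinearMap.compl₂_apply, DkL_word, List.take_zero, List.drop_zero]
  rw [m_one_left hm, Dk_succ]

lemma DkL_succ_apply (hm : IsPhiShuffle φ m) (k : ℕ) (p : List Y →₀ K) :
    DkL m (k+1) p = splitL (m.compl₂ (DkL m k)) p - DkL m k p := by
  induction p using Finsupp.induction_linear with
  | zero => simp
  | add f g hf hg => rw [map_add, map_add, map_add, hf, hg]; abel
  | single w c =>
      rw [single_eq_smul_word, map_smul, map_smul, map_smul, DkL_word, DkL_word,
        splitBk_word hm, ← smul_sub]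
      congr 1
      abel

lemma minterchange (hm : IsPhiShuffle φ m) (hassoc : PhiAssoc φ) (hcomm : PhiComm φ)
    (A B C D : List Y →₀ K) : m (m A B) (m C D) = m (m A C) (m B D) := by
  rw [m_assoc hm hassoc A B (m C D), m_assoc hm hassoc A C (m B D)]
  congr 1
  rw [← m_assoc hm hassoc B C D, ← m_assoc hm hassoc C B D, m_comm hm hcomm B C]

lemma Dsum (hm : IsPhiShuffle φ m) (i : ℕ) (u : List Y) :
    (∑ s ∈ Finset.range (u.length + 1), m (word (u.take s)) (Dk m i (u.drop s)))
      = Dk m i u + Dk m (i+1) u := by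
  rw [Finset.sum_range_succ']
  simp only [List.take_zero, List.drop_zero]
  rw [m_one_left hm, ← Dk_succ]
  abel

lemma shiftlem {M : Type*} [AddCommMonoid M] (f : ℕ → M) (k : ℕ) (h : f (k+1) = 0) :
    ∑ j ∈ Finset.range (k+1), f j = (∑ j ∈ Finset.range (k+1), f (j+1)) + f 0 := by
  have h1 := Finset.sum_range_succ f (k+1)
  have h2 := Finset.sum_range_succ' f (k+1)
  rw [h, add_zero] at h1
  rw [← h1, h2]

lemma sum4_swap {M : Type*} [AddCommMonoid M] (S T R₁ R₂ : Finset ℕ) (f : ℕ → ℕ → ℕ → ℕ → M) :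
    (∑ s ∈ S, ∑ t ∈ T, ∑ i ∈ R₁, ∑ j ∈ R₂, f s t i j)
      = ∑ i ∈ R₁, ∑ j ∈ R₂, ∑ s ∈ S, ∑ t ∈ T, f s t i j := by
  have h1 : ∀ s, (∑ t ∈ T, ∑ i ∈ R₁, ∑ j ∈ R₂, f s t i j)
      = ∑ i ∈ R₁, ∑ t ∈ T, ∑ j ∈ R₂, f s t i j := fun s => Finset.sum_comm
  rw [Finset.sum_congr rfl fun s _ => h1 s, Finset.sum_comm]
  refine Finset.sum_congr rfl fun i _ => ?_
  have h2 : ∀ s, (∑ t ∈ T, ∑ j ∈ R₂, f s t i j)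
      = ∑ j ∈ R₂, ∑ t ∈ T, f s t i j := fun s => Finset.sum_comm
  rw [Finset.sum_congr rfl fun s _ => h2 s, Finset.sum_comm]

lemma m_sum_sum (sS sT : Finset ℕ) (A B : ℕ → List Y →₀ K) :
    m (∑ x ∈ sS, A x) (∑ y ∈ sT, B y) = ∑ x ∈ sS, ∑ y ∈ sT, m (A x) (B y) := by
  have h1 : m (∑ x ∈ sS, A x) = ∑ x ∈ sS, m (A x) := map_sum m A sS
  rw [h1, LinearMap.sum_apply]
  exact Finset.sum_congr rfl fun x _ => map_sum (m (A x)) B sT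

set_option maxHeartbeats 2000000 in
lemma L3 (hm : IsPhiShuffle φ m) (hassoc : PhiAssoc φ) (hcomm : PhiComm φ) :
    ∀ (k : ℕ) (u v : List Y),
      DkL m k (m (word u) (word v))
        = ∑ i ∈ Finset.range (k+1), ∑ j ∈ Finset.range (k+1),
            cc k i j • m (Dk m i u) (Dk m j v) := by
  intro k
  induction k with
  | zero =>
      intro u v
      rw [DkL_zero_apply]
      simp only [zero_add, Finset.sum_range_one]
      rw [show cc 0 0 0 = 1 from rfl, one_smul, Dk_zero' u, Dk_zero' v]
      cases u with
      | nil =>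
          rw [if_pos rfl, m_one_left hm, m_one_left hm]
          by_cases h : v = []
          · subst h; simp [word, Finsupp.single_apply]
          · rw [if_neg h]
            simp [word, Finsupp.single_apply, h]
      | cons a u' =>
          rw [m_cons_nil hm, zero_smul]
          simp only [if_neg (List.cons_ne_nil a u')]
          rw [map_zero, LinearMap.zero_apply]
  | succ k ih =>
      intro u v
      have hmain : splitL (m.compl₂ (DkL m k)) (m (word u) (word v))
          = ∑ i ∈ Finset.range (k+1), ∑ j ∈ Finset.range (k+1),
              cc k i j • m (Dk m i u + Dk m (i+1) u) (Dk m j v + Dk m (j+1) v) := by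
        rw [bialg hm (u.length + v.length) u v (m.compl₂ (DkL m k)) le_rfl]
        have hterm : ∀ s ∈ Finset.range (u.length + 1), ∀ t ∈ Finset.range (v.length + 1),
            (m.compl₂ (DkL m k)) (m (word (u.take s)) (word (v.take t)))
                (m (word (u.drop s)) (word (v.drop t)))
            = ∑ i ∈ Finset.range (k+1), ∑ j ∈ Finset.range (k+1),
                cc k i j • m (m (word (u.take s)) (Dk m i (u.drop s)))
                  (m (word (v.take t)) (Dk m j (v.drop t))) := by
          intro s _ t _
          rw [LinearMap.compl₂_apply, ih (u.drop s) (v.drop t), map_sum]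
          refine Finset.sum_congr rfl fun i _ => ?_
          rw [map_sum]
          refine Finset.sum_congr rfl fun j _ => ?_
          rw [m_qsmul_right]
          congr 1
          exact minterchange hm hassoc hcomm _ _ _ _
        rw [Finset.sum_congr rfl fun s hs => Finset.sum_congr rfl fun t ht => hterm s hs t ht,
          sum4_swap]
        refine Finset.sum_congr rfl fun i _ => Finset.sum_congr rfl fun j _ => ?_
        rw [← Dsum hm i u, ← Dsum hm j v, m_sum_sum, Finset.smul_sum]
        exact Finset.sum_congr rfl fun s _ => (Finset.smul_sum).symm
      rw [DkL_succ_apply hm k, hmain, ih u v]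
      have hL : ∀ i j : ℕ,
          cc k i j • m (Dk m i u + Dk m (i+1) u) (Dk m j v + Dk m (j+1) v)
          = cc k i j • m (Dk m i u) (Dk m j v)
            + (cc k i j • m (Dk m i u) (Dk m (j+1) v)
              + cc k i j • m (Dk m (i+1) u) (Dk m j v)
              + cc k i j • m (Dk m (i+1) u) (Dk m (j+1) v)) := by
        intro i j
        simp only [map_add, LinearMap.add_apply, smul_add]
        abel
      rw [Finset.sum_congr rfl fun i _ => Finset.sum_congr rfl fun j _ => hL i j]
      simp only [Finset.sum_add_distrib]
      have cross1 : (∑ i ∈ Finset.range (k+1), ∑ j ∈ Finset.range (k+1),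
            cc k i j • m (Dk m i u) (Dk m (j+1) v))
          = (∑ i ∈ Finset.range (k+1), ∑ j ∈ Finset.range (k+1),
              cc k (i+1) j • m (Dk m (i+1) u) (Dk m (j+1) v))
            + ∑ j ∈ Finset.range (k+1), cc k 0 j • m (Dk m 0 u) (Dk m (j+1) v) := by
        exact shiftlem (fun i => ∑ j ∈ Finset.range (k+1),
          cc k i j • m (Dk m i u) (Dk m (j+1) v)) k
          (Finset.sum_eq_zero fun j _ => by
            simp only [ccz1 k (k+1) j (by omega), zero_smul])
      have cross2 : (∑ i ∈ Finset.range (k+1), ∑ j ∈ Finset.range (k+1),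
            cc k i j • m (Dk m (i+1) u) (Dk m j v))
          = (∑ i ∈ Finset.range (k+1), ∑ j ∈ Finset.range (k+1),
              cc k i (j+1) • m (Dk m (i+1) u) (Dk m (j+1) v))
            + ∑ i ∈ Finset.range (k+1), cc k i 0 • m (Dk m (i+1) u) (Dk m 0 v) := by
        rw [Finset.sum_congr rfl fun i _ => shiftlem
          (fun j => cc k i j • m (Dk m (i+1) u) (Dk m j v)) k
          (by simp only [ccz2 k i (k+1) (by omega), zero_smul]), Finset.sum_add_distrib]
      rw [cross1, cross2]
      have inner1 : ∀ i : ℕ, (∑ j ∈ Finset.range (k+1+1), cc (k+1) (i+1) j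
            • m (Dk m (i+1) u) (Dk m j v))
          = (∑ j ∈ Finset.range (k+1), (cc k i (j+1) • m (Dk m (i+1) u) (Dk m (j+1) v)
              + cc k (i+1) j • m (Dk m (i+1) u) (Dk m (j+1) v)
              + cc k i j • m (Dk m (i+1) u) (Dk m (j+1) v)))
            + cc k i 0 • m (Dk m (i+1) u) (Dk m 0 v) := by
        intro i
        rw [Finset.sum_range_succ' (fun j => cc (k+1) (i+1) j
          • m (Dk m (i+1) u) (Dk m j v)) (k+1), cc_ss0]
        congr 1
        refine Finset.sum_congr rfl fun j _ => ?_
        rw [cc_sss, add_smul, add_smul]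
      have inner0 : (∑ j ∈ Finset.range (k+1+1), cc (k+1) 0 j • m (Dk m 0 u) (Dk m j v))
          = ∑ j ∈ Finset.range (k+1), cc k 0 j • m (Dk m 0 u) (Dk m (j+1) v) := by
        rw [Finset.sum_range_succ' (fun j => cc (k+1) 0 j • m (Dk m 0 u) (Dk m j v)) (k+1),
          cc_s00, zero_smul, add_zero]
        exact Finset.sum_congr rfl fun j _ => by rw [cc_s0s]
      have hR : (∑ i ∈ Finset.range (k+1+1), ∑ j ∈ Finset.range (k+1+1),
            cc (k+1) i j • m (Dk m i u) (Dk m j v))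
          = ((∑ i ∈ Finset.range (k+1), ∑ j ∈ Finset.range (k+1),
              cc k i (j+1) • m (Dk m (i+1) u) (Dk m (j+1) v))
            + (∑ i ∈ Finset.range (k+1), ∑ j ∈ Finset.range (k+1),
              cc k (i+1) j • m (Dk m (i+1) u) (Dk m (j+1) v))
            + (∑ i ∈ Finset.range (k+1), ∑ j ∈ Finset.range (k+1),
              cc k i j • m (Dk m (i+1) u) (Dk m (j+1) v)))
            + (∑ i ∈ Finset.range (k+1), cc k i 0 • m (Dk m (i+1) u) (Dk m 0 v))
            + ∑ j ∈ Finset.range (k+1), cc k 0 j • m (Dk m 0 u) (Dk m (j+1) v) := by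
        rw [Finset.sum_range_succ' (fun i => ∑ j ∈ Finset.range (k+1+1),
          cc (k+1) i j • m (Dk m i u) (Dk m j v)) (k+1)]
        rw [Finset.sum_congr rfl fun i _ => inner1 i, inner0, Finset.sum_add_distrib]
        simp only [Finset.sum_add_distrib]
      rw [hR]
      abel
lemma consL_apply_cons (a b : Y) (p : List Y →₀ K) (w : List Y) :
    (consL a p) (b :: w) = if a = b then p w else 0 := by
  by_cases h : a = b
  · subst h
    rw [if_pos rfl]
    show (Finsupp.mapDomain (List.cons a) p) (a :: w) = p w
    exact Finsupp.mapDomain_apply (fun x y hxy => by injection hxy) p w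
  · rw [if_neg h]
    show (Finsupp.mapDomain (List.cons a) p) (b :: w) = 0
    refine Finsupp.mapDomain_notin_range p _ ?_
    rintro ⟨x, hx⟩
    injection hx with h1 h2
    exact h h1

lemma m_apply_long (hm : IsPhiShuffle φ m) :
    ∀ (n : ℕ) (u v : List Y), u.length + v.length ≤ n →
      ∀ w' : List Y, u.length + v.length < w'.length → (m (word u) (word v)) w' = 0 := by
  intro n
  induction n with
  | zero =>
      intro u v h w' hw'
      have hu : u = [] := by cases u <;> simp_all
      have hv : v = [] := by cases v <;> simp_all
      subst hu; subst hv
      rw [m_one_left hm]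
      simp only [List.length_nil, add_zero] at hw'
      have hne : w' ≠ [] := by intro hc; subst hc; simp at hw'
      show (Finsupp.single ([] : List Y) (1:K)) w' = 0
      rw [Finsupp.single_apply, if_neg (fun hc => hne hc.symm)]
  | succ n ih =>
      intro u v h w' hw'
      match u, v with
      | [], v =>
          rw [m_one_left hm]
          have hne : v ≠ w' := by
            intro hc; subst hc
            simp only [List.length_nil, zero_add] at hw'; omega
          show (Finsupp.single v (1:K)) w' = 0
          rw [Finsupp.single_apply, if_neg hne]
      | a :: u', [] =>
          rw [m_one_right hm]
          have hne : (a :: u') ≠ w' := by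
            intro hc; subst hc; simp only [List.length_nil, add_zero] at hw'; omega
          show (Finsupp.single (a :: u') (1:K)) w' = 0
          rw [Finsupp.single_apply, if_neg hne]
      | a :: u', b :: v' =>
          simp only [List.length_cons] at h hw'
          rw [hm_rec hm]
          simp only [Finsupp.add_apply]
          cases w' with
          | nil => simp at hw'
          | cons c w'' =>
              simp only [List.length_cons] at hw'
              have h1 : (consL a (m (word u') (word (b :: v')))) (c :: w'') = 0 := by
                rw [consL_apply_cons]
                split_ifs with hac
                · exact ih u' (b :: v') (by simp only [List.length_cons]; omega) w''
                    (by simp only [List.length_cons]; omega)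
                · rfl
              have h2 : (consL b (m (word (a :: u')) (word v'))) (c :: w'') = 0 := by
                rw [consL_apply_cons]
                split_ifs with hbc
                · exact ih (a :: u') v' (by simp only [List.length_cons]; omega) w''
                    (by simp only [List.length_cons]; omega)
                · rfl
              have h3 : (phL (m (word u') (word v')) (φ a b)) (c :: w'') = 0 := by
                rw [phL_apply, Finsupp.sum_apply, Finsupp.sum]
                refine Finset.sum_eq_zero fun d _ => ?_
                rw [Finsupp.smul_apply, consL_apply_cons]
                split_ifs with hdc
                · rw [ih u' v' (by omega) w'' (by omega), smul_zero]
                · rw [smul_zero]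
              rw [h1, h2, h3, add_zero, add_zero]

/-- The pairing with a series, as a linear map. -/
def pairL (S : List Y → K) : (List Y →₀ K) →ₗ[K] K :=
  Finsupp.lsum K fun w => LinearMap.toSpanSingleton K K (S w)

lemma pairL_eq (S : List Y → K) (p : List Y →₀ K) : pairPS S p = pairL S p := by
  simp only [pairPS, pairL, Finsupp.lsum_apply]
  exact Finsupp.sum_congr fun w _ => by
    simp [LinearMap.toSpanSingleton_apply, smul_eq_mul]

lemma pairL_word (S : List Y → K) (w : List Y) : pairL S (word w) = S w := by
  simp [pairL, word, Finsupp.lsum_single, LinearMap.toSpanSingleton_apply]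

lemma pairL_qsmul (S : List Y → K) (c : ℚ) (p : List Y →₀ K) :
    pairL S (c • p) = algebraMap ℚ K c * pairL S p := by
  rw [map_qsmul (pairL S) c p, Algebra.smul_def]

lemma sum_map_const_mul {α : Type*} (l : List α) (c : K) (f : α → K) :
    (l.map fun x => c * f x).sum = c * (l.map f).sum := by
  induction l with
  | nil => simp
  | cons x l ih => simp [ih, mul_add]

lemma piOne_nil (S : List Y → K) : piOneS m S [] = 0 := by
  show ((cuts ([] : List Y)).map _).sum = 0
  rw [show cuts ([] : List Y) = [[]] from rfl]
  simp only [List.map_cons, List.map_nil, List.sum_cons, List.sum_nil, List.length_nil]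
  norm_num

lemma piOne_Dk (S : List Y → K) (w : List Y) (N : ℕ) (h : w.length ≤ N) :
    piOneS m S w = ∑ k ∈ Finset.range (N+1),
      algebraMap ℚ K ((-1)^(k-1) / (k : ℚ)) * pairL S (Dk m k w) := by
  show ((cuts w).map _).sum = _
  rw [sum_map_bucket (cuts w) _ List.length (N+1)
    (fun P hP => by have := mem_cuts_len w P hP; omega)]
  refine Finset.sum_congr rfl fun k _ => ?_
  have hmap : ((cuts w).filter fun P => P.length = k).map (fun parts =>
        algebraMap ℚ K ((-1)^(parts.length-1) / (parts.length : ℚ))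
          * pairPS S (prodM m (parts.map word)))
      = ((cuts w).filter fun P => P.length = k).map (fun parts =>
        algebraMap ℚ K ((-1)^(k-1) / (k : ℚ)) * pairL S (prodM m (parts.map word))) := by
    refine List.map_congr_left fun P hP => ?_
    have hlen : P.length = k := by simpa using List.of_mem_filter hP
    rw [hlen, pairL_eq]
  rw [hmap, sum_map_const_mul]
  congr 1
  show _ = pairL S (Dk m k w)
  unfold Dk
  rw [map_list_sum (pairL S), List.map_map]
  rfl

lemma prim_nil (hm : IsPhiShuffle φ m) (S : List Y → K) (hS : PrimS m S) : S [] = 0 := by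
  have h : S [] = S [] + S [] := by
    have h0 := hS [] []
    simp only [DeltaS] at h0
    rw [m_one_left hm, pairL_eq, pairL_word] at h0
    simpa using h0
  exact left_eq_add.mp h

lemma prim_pair (hm : IsPhiShuffle φ m) (S : List Y → K) (hS : PrimS m S) (a : Y)
    (u : List Y) (p : List Y →₀ K) :
    pairL S (m (word (a :: u)) p) = p [] * S (a :: u) := by
  induction p using Finsupp.induction_linear with
  | zero => simp
  | add f g hf hg =>
      rw [map_add, map_add, hf, hg, Finsupp.add_apply, add_mul]
  | single w c =>
      rw [single_eq_smul_word, map_smul, map_smul, Finsupp.smul_apply]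
      have h := hS (a :: u) w
      simp only [DeltaS] at h
      rw [pairL_eq] at h
      rw [h, if_neg (List.cons_ne_nil a u), add_zero]
      by_cases hw : w = []
      · subst hw
        simp [word, Finsupp.single_apply, smul_eq_mul]
      · rw [if_neg hw]
        simp [word, Finsupp.single_apply, hw, smul_eq_mul]

lemma Dk_nilcoeff (hm : IsPhiShuffle φ m) (k : ℕ) (w : List Y) :
    (Dk m (k+1) w) [] = 0 := by
  cases w with
  | nil => rw [Dk_succ]; simp
  | cons c w'' =>
      rw [Dk_succ, Finset.sum_apply']
      refine Finset.sum_eq_zero fun s _ => ?_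
      rw [List.take_succ_cons, m_cons_nil hm]

lemma pair_Dk_ge2 (hm : IsPhiShuffle φ m) (S : List Y → K) (hS : PrimS m S) (k : ℕ)
    (w : List Y) : pairL S (Dk m (k+2) w) = 0 := by
  rw [Dk_succ, map_sum]
  refine Finset.sum_eq_zero fun s hs => ?_
  cases w with
  | nil => simp at hs
  | cons c w'' =>
      rw [List.take_succ_cons, prim_pair hm S hS, Dk_nilcoeff hm, zero_mul]

lemma Dk_one' (hm : IsPhiShuffle φ m) (w : List Y) (hw : w ≠ []) : Dk m 1 w = word w := by
  show Dk m (0 + 1) w = word w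
  rw [Dk_succ]
  have hlen : 1 ≤ w.length := by
    cases w with
    | nil => exact absurd rfl hw
    | cons x t => simp only [List.length_cons]; omega
  have hc : ∀ s ∈ Finset.range w.length,
      m (word (w.take (s+1))) (Dk m 0 (w.drop (s+1)))
      = if s = w.length - 1 then word w else 0 := by
    intro s hs
    have hsr := Finset.mem_range.mp hs
    rw [Dk_zero']
    by_cases hd : w.drop (s+1) = []
    · have hle : w.length ≤ s + 1 := by
        by_contra hcon
        exact absurd (List.drop_eq_nil_iff.mp hd) (by omega)
      rw [if_pos hd, if_pos (by omega), m_one_right hm,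
        List.take_of_length_le (by omega)]
    · have hgt : ¬(w.length ≤ s + 1) := fun hcon => hd (List.drop_eq_nil_iff.mpr hcon)
      rw [if_neg hd, if_neg (by omega), map_zero]
  rw [Finset.sum_congr rfl hc, Finset.sum_ite_eq' (Finset.range w.length) (w.length - 1)
    (fun _ => word w), if_pos (Finset.mem_range.mpr (by omega))]

lemma part3 (hm : IsPhiShuffle φ m) (S : List Y → K) (hS : PrimS m S) :
    piOneS m S = S := by
  funext w
  cases w with
  | nil => rw [piOne_nil, prim_nil hm S hS]
  | cons c w'' =>
      rw [piOne_Dk S (c :: w'') (c :: w'').length le_rfl]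
      have hterm : ∀ k ∈ Finset.range ((c :: w'').length + 1),
          algebraMap ℚ K ((-1)^(k-1) / (k : ℚ)) * pairL S (Dk m k (c :: w''))
          = if k = 1 then S (c :: w'') else 0 := by
        intro k _
        match k with
        | 0 =>
            rw [Dk_zero', if_neg (List.cons_ne_nil c w''), map_zero, mul_zero,
              if_neg (by omega)]
        | 1 =>
            rw [Dk_one' hm _ (List.cons_ne_nil c w''), pairL_word, if_pos rfl]
            norm_num
        | (k+2) =>
            rw [pair_Dk_ge2 hm S hS, mul_zero, if_neg (by omega)]
      rw [Finset.sum_congr rfl hterm,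
        Finset.sum_ite_eq' (Finset.range ((c :: w'').length + 1)) 1
          (fun _ => S (c :: w'')),
        if_pos (Finset.mem_range.mpr (by simp only [List.length_cons]; omega))]

lemma sum3_swap {M : Type*} [AddCommMonoid M] (A B C : Finset ℕ) (f : ℕ → ℕ → ℕ → M) :
    (∑ k ∈ A, ∑ i ∈ B, ∑ j ∈ C, f k i j) = ∑ i ∈ B, ∑ j ∈ C, ∑ k ∈ A, f k i j := by
  rw [Finset.sum_comm]
  exact Finset.sum_congr rfl fun i _ => Finset.sum_comm

set_option maxHeartbeats 1000000 in
lemma part2 (hm : IsPhiShuffle φ m) (hassoc : PhiAssoc φ) (hcomm : PhiComm φ)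
    (S : List Y → K) : PrimS m (piOneS m S) := by
  intro u v
  show pairPS (piOneS m S) (m (word u) (word v)) = _
  match u, v with
  | [], v =>
      rw [m_one_left hm, pairL_eq, pairL_word, if_pos rfl]
      by_cases hv : v = []
      · subst hv
        rw [if_pos rfl, piOne_nil]
        simp
      · rw [if_neg hv]
        simp
  | a :: u', [] =>
      rw [m_one_right hm, pairL_eq, pairL_word, if_pos rfl,
        if_neg (List.cons_ne_nil a u'), add_zero]
  | a :: u', b :: v' =>
      rw [if_neg (List.cons_ne_nil b v'), if_neg (List.cons_ne_nil a u'), add_zero]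
      set N := (a :: u').length + (b :: v').length with hN
      have key : ∀ p : List Y →₀ K, (∀ w' ∈ p.support, w'.length ≤ N) →
          pairPS (piOneS m S) p = ∑ k ∈ Finset.range (N+1),
            algebraMap ℚ K ((-1)^(k-1) / (k : ℚ)) * pairL S (DkL m k p) := by
        intro p hp
        rw [pairPS, Finsupp.sum]
        have h1 : ∀ w' ∈ p.support, p w' * piOneS m S w'
            = ∑ k ∈ Finset.range (N+1),
              algebraMap ℚ K ((-1)^(k-1) / (k : ℚ)) * (p w' * pairL S (Dk m k w')) := by
          intro w' hw'
          rw [piOne_Dk S w' N (hp w' hw'), Finset.mul_sum]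
          exact Finset.sum_congr rfl fun k _ => by ring
        rw [Finset.sum_congr rfl h1, Finset.sum_comm]
        refine Finset.sum_congr rfl fun k _ => ?_
        rw [← Finset.mul_sum]
        congr 1
        have h2 : DkL m k p = ∑ w' ∈ p.support, p w' • Dk m k w' := by
          rw [DkL, Finsupp.lsum_apply, Finsupp.sum]
          exact Finset.sum_congr rfl fun w _ => by
            simp [LinearMap.toSpanSingleton_apply]
        rw [h2, map_sum]
        exact Finset.sum_congr rfl fun w' _ => by rw [map_smul, smul_eq_mul]
      have hplen : ∀ w' ∈ (m (word (a :: u')) (word (b :: v'))).support, w'.length ≤ N := by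
        intro w' hw'
        by_contra hlen
        exact (Finsupp.mem_support_iff.mp hw')
          (m_apply_long hm N (a :: u') (b :: v') le_rfl w' (by omega))
      rw [key _ hplen]
      have hext : ∀ k ∈ Finset.range (N+1),
          (∑ i ∈ Finset.range (k+1), ∑ j ∈ Finset.range (k+1),
            cc k i j • m (Dk m i (a :: u')) (Dk m j (b :: v')))
          = ∑ i ∈ Finset.range (N+1), ∑ j ∈ Finset.range (N+1),
            cc k i j • m (Dk m i (a :: u')) (Dk m j (b :: v')) := by
        intro k hk
        have hkN : k ≤ N := by have := Finset.mem_range.mp hk; omega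
        have hinner : ∀ i, (∑ j ∈ Finset.range (k+1),
              cc k i j • m (Dk m i (a :: u')) (Dk m j (b :: v')))
            = ∑ j ∈ Finset.range (N+1),
              cc k i j • m (Dk m i (a :: u')) (Dk m j (b :: v')) := fun i =>
          Finset.sum_subset (Finset.range_subset_range.mpr (by omega)) (fun j _ hj => by
            rw [ccz2 k i j (by simp only [Finset.mem_range, not_lt] at hj; omega),
              zero_smul])
        rw [Finset.sum_congr rfl fun i _ => hinner i]
        exact Finset.sum_subset (Finset.range_subset_range.mpr (by omega)) (fun i _ hi =>
          Finset.sum_eq_zero fun j _ => by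
            rw [ccz1 k i j (by simp only [Finset.mem_range, not_lt] at hi; omega),
              zero_smul])
      have hterm : ∀ k ∈ Finset.range (N+1),
          algebraMap ℚ K ((-1)^(k-1) / (k : ℚ))
            * pairL S (DkL m k (m (word (a :: u')) (word (b :: v'))))
          = ∑ i ∈ Finset.range (N+1), ∑ j ∈ Finset.range (N+1),
            algebraMap ℚ K ((-1)^(k-1) / (k : ℚ)) * (algebraMap ℚ K (cc k i j)
              * pairL S (m (Dk m i (a :: u')) (Dk m j (b :: v')))) := by
        intro k hk
        rw [L3 hm hassoc hcomm k, hext k hk, map_sum, Finset.mul_sum]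
        refine Finset.sum_congr rfl fun i _ => ?_
        rw [map_sum, Finset.mul_sum]
        refine Finset.sum_congr rfl fun j _ => ?_
        rw [pairL_qsmul]
      rw [Finset.sum_congr rfl hterm, sum3_swap]
      refine Finset.sum_eq_zero fun i hi => Finset.sum_eq_zero fun j hj => ?_
      by_cases hi0 : i = 0
      · subst hi0
        refine Finset.sum_eq_zero fun k _ => ?_
        rw [Dk_zero', if_neg (List.cons_ne_nil a u'), map_zero, LinearMap.zero_apply,
          map_zero, mul_zero, mul_zero]
      by_cases hj0 : j = 0
      · subst hj0
        refine Finset.sum_eq_zero fun k _ => ?_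
        rw [Dk_zero' (b :: v'), if_neg (List.cons_ne_nil b v'), map_zero, map_zero,
          mul_zero, mul_zero]
      by_cases hiu : (a :: u').length < i
      · refine Finset.sum_eq_zero fun k _ => ?_
        rw [Dk_bound i (a :: u') hiu, map_zero, LinearMap.zero_apply, map_zero,
          mul_zero, mul_zero]
      by_cases hjv : (b :: v').length < j
      · refine Finset.sum_eq_zero fun k _ => ?_
        rw [Dk_bound j (b :: v') hjv, map_zero, map_zero, mul_zero, mul_zero]
      have hij : i + j ≤ N := by omega
      have hkey := keyNum i j N (by omega) (by omega) hij
      rw [Finset.sum_congr rfl (fun k _ => by rw [← mul_assoc, ← map_mul]),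
        ← Finset.sum_mul, ← map_sum (algebraMap ℚ K) _ (Finset.range (N+1)), hkey,
        map_zero, zero_mul]

lemma part1 (hm : IsPhiShuffle φ m) (hassoc : PhiAssoc φ) (hcomm : PhiComm φ)
    (S : List Y → K) : piOneS m (piOneS m S) = piOneS m S :=
  part3 hm (piOneS m S) (part2 hm hassoc hcomm S)

end PiOne

/-- the extended Eulerian operator `π₁` is a projector whose image
is exactly the space of primitive series. -/
theorem piOne_projector_onto_primitives (φ : Y → Y → (Y →₀ K))
    (m : (List Y →₀ K) →ₗ[K] (List Y →₀ K) →ₗ[K] (List Y →₀ K))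
    (hm : IsPhiShuffle φ m) (hassoc : PhiAssoc φ) (hcomm : PhiComm φ)
    (hdual : PhiDualizable φ) :
    (∀ S : List Y → K, piOneS m (piOneS m S) = piOneS m S) ∧
    (∀ S : List Y → K, PrimS m (piOneS m S)) ∧
    (∀ S : List Y → K, PrimS m S → piOneS m S = S) := by
  exact ⟨fun S => PiOne.part1 hm hassoc hcomm S, fun S => PiOne.part2 hm hassoc hcomm S,
    fun S hS => PiOne.part3 hm S hS⟩

end
end
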